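/- arXiv:2011.09866 — 4 statements merged into one kernel-verified Lean document; each statement's English description precedes it below -/
import Mathlib

section
/- There exists a class ℒ of recursive languages such that ℒ ∈ [TxtTdEx_W]_REC but ℒ ∉ [TxtGEx_C]_REC; that is, some partial computable transductive learner Ex_W-learns every member of ℒ, but no partial computable Gold-style (full-information) learner Ex_C-learns every member of ℒ. -/
namespace InductiveInference

/-- `φ_e` : the `e`-th partial computable function, via the standard numbering
of `Nat.Partrec.Code`. -/
def phi (e : ℕ) : ℕ →. ℕ := (Denumerable.ofNat Nat.Partrec.Code e).eval

/-- `W_e` : the domain of `φ_e`. -/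
def Wset (e : ℕ) : Set ℕ := (phi e).Dom

/-- `e` is a C-index: `φ_e` is total with values in `{0,1}`. -/
def CIndex (e : ℕ) : Prop := ∀ x, phi e x = Part.some 0 ∨ phi e x = Part.some 1

/-- `C_e = {x | φ_e x = 1}`. -/
def Cset (e : ℕ) : Set ℕ := {x | phi e x = Part.some 1}

/-- A language is recursive (decidable). -/
def RecLang (L : Set ℕ) : Prop := ∃ f : ℕ → Bool, Computable f ∧ ∀ x, x ∈ L ↔ f x = true

/-- Texts: total functions `ℕ → ℕ ∪ {#}`; `none` is the pause symbol `#`. -/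
abbrev Text := ℕ → Option ℕ

/-- The content of a text: its range minus the pause symbol. -/
def content (T : Text) : Set ℕ := {x | ∃ n, T n = some x}

/-- The initial segment `T[n] = (T 0, …, T (n-1))`. -/
def initSeg (T : Text) (n : ℕ) : List (Option ℕ) := (List.range n).map T

/-- The (finite) content of the initial segment `T[n]`. -/
def fincontent (T : Text) (n : ℕ) : Finset ℕ := ((initSeg T n).filterMap id).toFinset

/-- A canonical numerical code for a finite set of naturals. -/
def setCode (D : Finset ℕ) : ℕ := Encodable.encode (D.sort (· ≤ ·))

/-- Learners: partial functions on (suitably coded) natural number inputs. -/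
abbrev Learner := ℕ →. ℕ

/-- The learner is partial computable. -/
def PartComputable (h : Learner) : Prop := Nat.Partrec h

/-- The learner is total computable. -/
def TotalComputable (h : Learner) : Prop := Nat.Partrec h ∧ ∀ x, (h x).Dom

/-- Hypothesis sequences (possibly undefined at some points). -/
abbrev HypSeq := ℕ → Part ℕ

/-- Gold-style (full-information) learning: `G(h,T)(i) = h(T[i])`. -/
def Gop (h : Learner) (T : Text) (i : ℕ) : Part ℕ :=
  h (Encodable.encode (initSeg T i))

/-- Partially set-driven learning: `Psd(h,T)(i) = h(content T[i], i)`. -/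
def Psdop (h : Learner) (T : Text) (i : ℕ) : Part ℕ :=
  h (Nat.pair (setCode (fincontent T i)) i)

/-- Set-driven learning: `Sd(h,T)(i) = h(content T[i])`. -/
def Sdop (h : Learner) (T : Text) (i : ℕ) : Part ℕ :=
  h (setCode (fincontent T i))

/-- Iterative learning: the input `none` codes the empty start sequence `ε`,
and `some (e, x)` codes the pair of previous hypothesis `e` and datum `x`. -/
def Itop (h : Learner) (T : Text) : ℕ → Part ℕ
  | 0 => h (Encodable.encode (none : Option (ℕ × Option ℕ)))
  | i + 1 => (Itop h T i).bind fun e =>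
      h (Encodable.encode (some (e, T i) : Option (ℕ × Option ℕ)))

/-- Transductive learning: the learner receives the single (coded) datum
`T i`; the output `0` codes the distinguished symbol `?`, and the output
`e + 1` codes the hypothesis `e`.  The value `?` of the hypothesis sequence
is represented by `Part.none`. -/
def Tdop (h : Learner) (T : Text) : ℕ → Part ℕ
  | 0 => Part.none
  | i + 1 => (h (Encodable.encode (T i))).bind fun v =>
      match v with
      | 0 => Tdop h T i
      | e + 1 => Part.some e

/-- `Ex_C`: syntactic convergence to a single correct C-index. -/
def ExC (p : HypSeq) (T : Text) : Prop :=
  ∃ n₀, (∀ n, n₀ ≤ n → p n = p n₀) ∧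
    ∃ e, p n₀ = Part.some e ∧ CIndex e ∧ Cset e = content T

/-- `Ex_W`: syntactic convergence to a single correct W-index. -/
def ExW (p : HypSeq) (T : Text) : Prop :=
  ∃ n₀, (∀ n, n₀ ≤ n → p n = p n₀) ∧
    ∃ e, p n₀ = Part.some e ∧ Wset e = content T

/-- `Bc_C`: semantic convergence to correct C-indices. -/
def BcC (p : HypSeq) (T : Text) : Prop :=
  ∃ n₀, ∀ n, n₀ ≤ n → ∃ e, p n = Part.some e ∧ CIndex e ∧ Cset e = content T

/-- `Bc_W`: semantic convergence to correct W-indices. -/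
def BcW (p : HypSeq) (T : Text) : Prop :=
  ∃ n₀, ∀ n, n₀ ≤ n → ∃ e, p n = Part.some e ∧ Wset e = content T

/-- `CInd`: every hypothesis output is a C-index. -/
def CIndRes (p : HypSeq) (_T : Text) : Prop :=
  ∀ i e, p i = Part.some e → CIndex e

/-- `T`: the always-true restriction. -/
def TrueRes (_p : HypSeq) (_T : Text) : Prop := True

abbrev InteractionOp := Learner → Text → HypSeq
abbrev Restriction := HypSeq → Text → Prop

/-- Conjunction of restrictions. -/
def andRes (δ δ' : Restriction) : Restriction := fun p T => δ p T ∧ δ' p T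

/-- `h` `Txtβδ`-learns `L`: on every text for `L` the restriction `δ` holds. -/
def Learns (β : InteractionOp) (δ : Restriction) (h : Learner) (L : Set ℕ) : Prop :=
  ∀ T : Text, content T = L → δ (β h T) T

/-- The restriction `α` holds for `h` on all texts whatsoever. -/
def OnAllTexts (β : InteractionOp) (α : Restriction) (h : Learner) : Prop :=
  ∀ T : Text, α (β h T) T

/-- A class of recursive languages. -/
def IsRecClass (ℒ : Set (Set ℕ)) : Prop := ∀ L ∈ ℒ, RecLang L

/-- `[𝒞Txtβδ]_REC`: classes of recursive languages learnable by some
learner from `C` under interaction operator `β` and restriction `δ`. -/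
def LearnableREC (C : Learner → Prop) (β : InteractionOp) (δ : Restriction) :
    Set (Set (Set ℕ)) :=
  {ℒ | IsRecClass ℒ ∧ ∃ h, C h ∧ ∀ L ∈ ℒ, Learns β δ h L}

/-- `[τ(α)𝒞Txtβδ]_REC`: as above, where additionally `α` must hold on
arbitrary texts. -/
def TauLearnableREC (C : Learner → Prop) (α : Restriction) (β : InteractionOp)
    (δ : Restriction) : Set (Set (Set ℕ)) :=
  {ℒ | IsRecClass ℒ ∧ ∃ h, C h ∧ OnAllTexts β α h ∧ ∀ L ∈ ℒ, Learns β δ h L}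

set_option maxHeartbeats 1000000

namespace SepProof
open Nat.Partrec (Code)
open Nat.Partrec.Code

abbrev St := List (Option ℕ) × ℕ

def special (i : ℕ) : ℕ := Nat.pair 0 i
def filler (i m : ℕ) : ℕ := Nat.pair 1 (Nat.pair i m)
def stInit (i : ℕ) : St := ([some (special i)], 0)

def padded (st : St) (k : ℕ) : List (Option ℕ) :=
  st.1 ++ List.replicate k (none : Option ℕ)

def condFn (i : ℕ) (st : St) (u : ℕ) : Option ℕ :=
  (evaln u.unpair.1 (Denumerable.ofNat Code i)
      (Encodable.encode (padded st u.unpair.2))).bind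
    fun e => evaln u.unpair.1 (Denumerable.ofNat Code e) (filler i st.2)

def nextSt (i : ℕ) (st : St) (u : ℕ) (v : ℕ) : St :=
  (padded st u.unpair.2 ++ [if v = 0 then some (filler i st.2) else none], st.2 + 1)

def stepOpt (i : ℕ) (st : St) (u : ℕ) : Option St :=
  (condFn i st u).map (nextSt i st u)

def stage (i : ℕ) (st : St) : Part St := Nat.rfindOpt (stepOpt i st)

def states (i : ℕ) : ℕ → Part St
  | 0 => Part.some (stInit i)
  | k + 1 => (states i k).bind (stage i)

lemma primrec_replicate : Primrec fun n : ℕ => List.replicate n (none : Option ℕ) := by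
  have h : Primrec fun n : ℕ => (List.range n).map (fun _ : ℕ => (none : Option ℕ)) :=
    Primrec.list_map Primrec.list_range ((Primrec.const (none : Option ℕ)).comp Primrec.fst).to₂
  exact h.of_eq fun n => by simp [List.map_const']

lemma primrec_filler : Primrec₂ filler :=
  (Primrec₂.natPair.comp (Primrec.const 1)
    (Primrec₂.natPair.comp Primrec.fst Primrec.snd)).to₂

lemma primrec_padded : Primrec₂ padded :=
  (Primrec.list_append.comp (Primrec.fst.comp Primrec.fst)
    (primrec_replicate.comp Primrec.snd)).to₂

lemma primrec_evaln2 : Primrec₂ fun (t : ℕ) (p : ℕ × ℕ) =>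
    evaln t (Denumerable.ofNat Code p.1) p.2 :=
  (primrec_evaln.comp ((Primrec.fst.pair
    ((Primrec.ofNat Code).comp (Primrec.fst.comp Primrec.snd))).pair
    (Primrec.snd.comp Primrec.snd))).to₂

lemma primrec_condFn : Primrec₂ fun (q : ℕ × St) (u : ℕ) => condFn q.1 q.2 u := by
  have h1 : Primrec fun p : (ℕ × St) × ℕ =>
      evaln p.2.unpair.1 (Denumerable.ofNat Code p.1.1)
        (Encodable.encode (padded p.1.2 p.2.unpair.2)) :=
    primrec_evaln2.comp (Primrec.fst.comp (Primrec.unpair.comp Primrec.snd))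
      ((Primrec.fst.comp Primrec.fst).pair (Primrec.encode.comp
        (primrec_padded.comp (Primrec.snd.comp Primrec.fst)
          (Primrec.snd.comp (Primrec.unpair.comp Primrec.snd)))))
  have h2 : Primrec₂ fun (p : (ℕ × St) × ℕ) (e : ℕ) =>
      evaln p.2.unpair.1 (Denumerable.ofNat Code e) (filler p.1.1 p.1.2.2) :=
    (primrec_evaln2.comp
      ((Primrec.fst.comp (Primrec.unpair.comp (Primrec.snd.comp Primrec.fst))))
      (Primrec.snd.pair (primrec_filler.comp
        (Primrec.fst.comp (Primrec.fst.comp Primrec.fst))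
        (Primrec.snd.comp (Primrec.snd.comp (Primrec.fst.comp Primrec.fst)))))).to₂
  exact (Primrec.option_bind h1 h2).to₂

lemma primrec_nextSt : Primrec₂ fun (p : (ℕ × St) × ℕ) (v : ℕ) =>
    nextSt p.1.1 p.1.2 p.2 v := by
  have hfill : Primrec fun p : ((ℕ × St) × ℕ) × ℕ => filler p.1.1.1 p.1.1.2.2 :=
    primrec_filler.comp (Primrec.fst.comp (Primrec.fst.comp Primrec.fst))
      (Primrec.snd.comp (Primrec.snd.comp (Primrec.fst.comp Primrec.fst)))
  have hif : Primrec fun p : ((ℕ × St) × ℕ) × ℕ =>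
      (if p.2 = 0 then some (filler p.1.1.1 p.1.1.2.2) else none : Option ℕ) :=
    Primrec.ite (Primrec.eq.comp Primrec.snd (Primrec.const 0))
      (Primrec.option_some.comp hfill) (Primrec.const none)
  have hl : Primrec fun p : ((ℕ × St) × ℕ) × ℕ => padded p.1.1.2 p.1.2.unpair.2 :=
    primrec_padded.comp (Primrec.snd.comp (Primrec.fst.comp Primrec.fst))
      (Primrec.snd.comp (Primrec.unpair.comp (Primrec.snd.comp Primrec.fst)))
  exact ((Primrec.list_append.comp hl
      (Primrec.list_cons.comp hif (Primrec.const []))).pair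
    (Primrec.succ.comp
      (Primrec.snd.comp (Primrec.snd.comp (Primrec.fst.comp Primrec.fst))))).to₂

lemma primrec_stepOpt : Primrec₂ fun (q : ℕ × St) (u : ℕ) => stepOpt q.1 q.2 u :=
  (Primrec.option_map (primrec_condFn.comp Primrec.fst Primrec.snd) primrec_nextSt).to₂

lemma partrec_stage : Partrec fun q : ℕ × St => stage q.1 q.2 :=
  Partrec.rfindOpt primrec_stepOpt.to_comp

theorem statesPartrec : Partrec fun q : ℕ × ℕ => states q.1 q.2 := by
  have hst : Computable stInit := by
    have h1 : Computable special :=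
      (Primrec₂.natPair.comp (Primrec.const 0) Primrec.id).to_comp
    exact (Computable.list_cons.comp (Computable.option_some.comp h1)
        (Computable.const [])).pair (Computable.const 0)
  have := Partrec.nat_rec (f := fun q : ℕ × ℕ => q.2)
    (g := fun q : ℕ × ℕ => Part.some (stInit q.1))
    (h := fun (q : ℕ × ℕ) (p : ℕ × St) => stage q.1 p.2)
    Computable.snd ((hst.comp Computable.fst).partrec)
    ((partrec_stage.comp ((Computable.fst.comp Computable.fst).pair
      (Computable.snd.comp Computable.snd))).to₂)
  exact this.of_eq fun q => by
    obtain ⟨i, k⟩ := q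
    induction k with
    | zero => rfl
    | succ k ih =>
        show _ = states i (k+1)
        rw [states, ← ih]

end SepProof

namespace SepProof
open Nat.Partrec (Code)
open Nat.Partrec.Code

lemma stage_mem {i : ℕ} {st st' : St} (h : st' ∈ stage i st) :
    ∃ u v, condFn i st u = some v ∧ st' = nextSt i st u v := by
  obtain ⟨u, hu⟩ := Nat.rfindOpt_spec h
  simp only [stepOpt, Option.mem_def, Option.map_eq_some_iff] at hu
  obtain ⟨v, hv, rfl⟩ := hu
  exact ⟨u, v, hv, rfl⟩

lemma stage_dom {i : ℕ} {st : St} :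
    (stage i st).Dom ↔ ∃ u v, condFn i st u = some v := by
  rw [stage, Nat.rfindOpt_dom]
  constructor
  · rintro ⟨n, a, ha⟩
    simp only [stepOpt, Option.mem_def, Option.map_eq_some_iff] at ha
    obtain ⟨v, hv, _⟩ := ha
    exact ⟨n, v, hv⟩
  · rintro ⟨u, v, hv⟩
    exact ⟨u, nextSt i st u v, by simp [stepOpt, Option.mem_def, hv]⟩

lemma mem_states_succ {i k : ℕ} {st' : St} :
    st' ∈ states i (k + 1) ↔ ∃ st ∈ states i k, st' ∈ stage i st := by
  simp [states, Part.mem_bind_iff]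

lemma states_counter {i k : ℕ} {st : St} (h : st ∈ states i k) : st.2 = k := by
  induction k generalizing st with
  | zero => simp only [states, Part.mem_some_iff] at h; subst h; rfl
  | succ k ih =>
      obtain ⟨st₀, h₀, h₁⟩ := mem_states_succ.1 h
      obtain ⟨u, v, _, rfl⟩ := stage_mem h₁
      simp [nextSt, ih h₀]

lemma states_length {i k : ℕ} {st : St} (h : st ∈ states i k) : k < st.1.length := by
  induction k generalizing st with
  | zero => simp only [states, Part.mem_some_iff] at h; subst h; simp [stInit]
  | succ k ih =>
      obtain ⟨st₀, h₀, h₁⟩ := mem_states_succ.1 h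
      obtain ⟨u, v, _, rfl⟩ := stage_mem h₁
      have := ih h₀
      simp only [nextSt, padded, List.length_append, List.length_replicate,
        List.length_singleton]
      omega

lemma states_prefix_add {i k d : ℕ} {st st' : St} (h : st ∈ states i k)
    (h' : st' ∈ states i (k + d)) : st.1 <+: st'.1 := by
  induction d generalizing st' with
  | zero => rw [Part.mem_unique h h']
  | succ d ih =>
      obtain ⟨st₀, h₀, h₁⟩ := mem_states_succ.1 h'
      obtain ⟨u, v, _, rfl⟩ := stage_mem h₁
      refine (ih h₀).trans ?_
      simp only [nextSt, padded]
      exact ((List.prefix_append _ _).trans (List.prefix_append _ _))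

lemma states_prefix {i k k' : ℕ} {st st' : St} (h : st ∈ states i k)
    (h' : st' ∈ states i k') (hk : k ≤ k') : st.1 <+: st'.1 := by
  obtain ⟨d, rfl⟩ := Nat.exists_eq_add_of_le hk
  exact states_prefix_add h h'

lemma states_dom_add {i k : ℕ} : ∀ d, (states i (k + d)).Dom → (states i k).Dom := by
  intro d
  induction d with
  | zero => exact id
  | succ d ih =>
      intro h
      apply ih
      obtain ⟨st, hst⟩ := Part.dom_iff_mem.1 h
      obtain ⟨st₀, h₀, -⟩ := mem_states_succ.1 hst
      exact Part.dom_iff_mem.2 ⟨st₀, h₀⟩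

lemma states_dom_mono {i k k' : ℕ} (hk : k ≤ k') (h : (states i k').Dom) :
    (states i k).Dom := by
  obtain ⟨d, rfl⟩ := Nat.exists_eq_add_of_le hk
  exact states_dom_add d h

lemma mem_states_elem {i k : ℕ} {st : St} (h : st ∈ states i k) {y : ℕ}
    (hy : some y ∈ st.1) : y = special i ∨ ∃ m, m < k ∧ y = filler i m := by
  induction k generalizing st with
  | zero =>
      simp only [states, Part.mem_some_iff] at h; subst h
      simp only [stInit, List.mem_singleton] at hy
      exact Or.inl (Option.some.inj hy)
  | succ k ih =>
      obtain ⟨st₀, h₀, h₁⟩ := mem_states_succ.1 h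
      obtain ⟨u, v, _, rfl⟩ := stage_mem h₁
      simp only [nextSt, padded, List.append_assoc, List.mem_append,
        List.mem_singleton, List.mem_replicate] at hy
      rcases hy with hy | hy | hy
      · rcases ih h₀ hy with h | ⟨m, hm, rfl⟩
        · exact Or.inl h
        · exact Or.inr ⟨m, by omega, rfl⟩
      · exact absurd hy.2 (by simp)
      · split at hy
        · injection hy.symm with hy'
          exact Or.inr ⟨st₀.2, by rw [states_counter h₀]; omega, hy'.symm⟩
        · exact absurd hy.symm (by simp)

lemma filler_ne_special {i m j : ℕ} : filler i m ≠ special j := by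
  intro h
  have := congrArg Nat.unpair h
  simp [filler, special, Nat.unpair_pair] at this

lemma filler_inj {i m m' : ℕ} (h : filler i m = filler i m') : m = m' := by
  have := congrArg Nat.unpair h
  simp only [filler, Nat.unpair_pair, Prod.mk.injEq] at this
  have h2 := congrArg Nat.unpair this.2
  simp only [Nat.unpair_pair, Prod.mk.injEq] at h2
  exact h2.2

lemma filler_mem_early {i k' m : ℕ} {st' : St} (h' : st' ∈ states i k')
    (hy : some (filler i m) ∈ st'.1) {st₁ : St} (h₁ : st₁ ∈ states i (m + 1)) :
    some (filler i m) ∈ st₁.1 := by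
  rcases le_or_gt k' (m + 1) with hk | hk
  · exact (states_prefix h' h₁ hk).subset hy
  · induction k' generalizing st' with
    | zero => omega
    | succ k ih =>
        obtain ⟨st₀, h₀, hst⟩ := mem_states_succ.1 h'
        obtain ⟨u, v, _, rfl⟩ := stage_mem hst
        simp only [nextSt, padded, List.append_assoc, List.mem_append,
          List.mem_singleton, List.mem_replicate] at hy
        rcases hy with hy | hy | hy
        · rcases le_or_gt k (m+1) with hk2 | hk2
          · exact (states_prefix h₀ h₁ hk2).subset hy
          · exact ih h₀ hy hk2
        · exact absurd hy.2 (by simp)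
        · split at hy
          · injection hy.symm with hy'
            have := states_counter h₀
            have : m = k := by rw [← this]; exact filler_inj hy'.symm
            omega
          · exact absurd hy.symm (by simp)

open Classical in
/-- The text built from the (possibly stalling) construction against learner `φ_i`. -/
noncomputable def Ttext (i : ℕ) : Text := fun n =>
  if h : ∃ p : St × ℕ, p.1 ∈ states i p.2 ∧ n < p.1.1.length
  then (Classical.choose h).1.1[n]'(Classical.choose_spec h).2
  else none

lemma Ttext_eq {i k n : ℕ} {st : St} (h : st ∈ states i k) (hn : n < st.1.length) :
    Ttext i n = st.1[n]'hn := by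
  have hex : ∃ p : St × ℕ, p.1 ∈ states i p.2 ∧ n < p.1.1.length := ⟨(st, k), h, hn⟩
  rw [Ttext, dif_pos hex]
  set p := Classical.choose hex with hp
  obtain ⟨hmem, hlen⟩ := Classical.choose_spec hex
  rcases le_total p.2 k with hk | hk
  · exact (states_prefix hmem h hk).getElem hlen
  · exact ((states_prefix h hmem hk).getElem hn).symm

lemma Ttext_none {i n : ℕ} (h : ∀ (k : ℕ) (st : St), st ∈ states i k → st.1.length ≤ n) :
    Ttext i n = none := by
  rw [Ttext, dif_neg]
  rintro ⟨p, hmem, hlen⟩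
  exact absurd (h p.2 p.1 hmem) (by omega)

lemma content_Ttext (i : ℕ) :
    content (Ttext i) = {y | ∃ (k : ℕ) (st : St), st ∈ states i k ∧ some y ∈ st.1} := by
  ext y
  constructor
  · rintro ⟨n, hn⟩
    by_cases hex : ∃ p : St × ℕ, p.1 ∈ states i p.2 ∧ n < p.1.1.length
    · obtain ⟨hmem, hlen⟩ := Classical.choose_spec hex
      rw [Ttext, dif_pos hex] at hn
      exact ⟨(Classical.choose hex).2, (Classical.choose hex).1, hmem,
        hn ▸ List.getElem_mem _⟩
    · rw [Ttext, dif_neg hex] at hn; exact absurd hn (by simp)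
  · rintro ⟨k, st, hmem, hy⟩
    obtain ⟨n, hn, hget⟩ := List.getElem_of_mem hy
    exact ⟨n, by rw [Ttext_eq hmem hn, hget]⟩

lemma initSeg_states {i k n : ℕ} {st : St} (h : st ∈ states i k)
    (hn : n ≤ st.1.length) : initSeg (Ttext i) n = st.1.take n := by
  apply List.ext_getElem
  · simp [initSeg, hn]
  · intro m hm₁ hm₂
    simp only [initSeg, List.getElem_map, List.getElem_range, List.getElem_take]
    have hmlen : m < st.1.length := lt_of_lt_of_le (by simpa [initSeg] using hm₁) hn
    exact Ttext_eq h hmlen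

lemma computable_mem : Computable₂ fun (y : ℕ) (l : List (Option ℕ)) => decide (some y ∈ l) := by
  have h' : Primrec fun p : ℕ × List (Option ℕ) =>
      p.2.foldr (fun o b => b || decide (o = some p.1)) false := by
    exact Primrec.list_foldr (f := fun p : ℕ × List (Option ℕ) => p.2)
      (g := fun _ => false)
      (h := fun a p => p.2 || decide (p.1 = some a.1))
      Primrec.snd (Primrec.const false)
      ((Primrec.or.comp (Primrec.snd.comp Primrec.snd)
        (Primrec.eq.comp (Primrec.fst.comp Primrec.snd)
          (Primrec.option_some.comp (Primrec.fst.comp Primrec.fst))).decide).to₂)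
  have h : Primrec fun p : ℕ × List (Option ℕ) => decide (some p.1 ∈ p.2) := by
    apply h'.of_eq
    rintro ⟨y, l⟩
    induction l with
    | nil => simp
    | cons a l ih => simp [List.mem_cons, ih, Bool.or_comm, eq_comm]
  exact h.to_comp.to₂

def psi : ℕ →. ℕ := fun z =>
  Nat.rfind fun k => (states z.unpair.1 k).map fun st => decide (some z.unpair.2 ∈ st.1)

lemma psiPartrec : Nat.Partrec psi := by
  rw [← Partrec.nat_iff]
  apply Partrec.rfind (p := fun (z : ℕ) (k : ℕ) =>
    (states z.unpair.1 k).map fun st => decide (some z.unpair.2 ∈ st.1))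
  have hs : Partrec fun q : ℕ × ℕ => states q.1.unpair.1 q.2 :=
    statesPartrec.comp (((Primrec.fst.comp (Primrec.unpair.comp Primrec.fst)).pair
      Primrec.snd).to_comp)
  exact (hs.map (computable_mem.comp
    ((Primrec.snd.comp (Primrec.unpair.comp (Primrec.fst.comp Primrec.fst))).to_comp)
    ((Primrec.fst.comp Primrec.snd).to_comp)).to₂).to₂

lemma psi_dom {i y : ℕ} : (psi (Nat.pair i y)).Dom ↔
    ∃ (k : ℕ) (st : St), st ∈ states i k ∧ some y ∈ st.1 := by
  rw [psi]
  simp only [Nat.unpair_pair]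
  refine Nat.rfind_dom.trans ?_
  constructor
  · rintro ⟨n, htrue, -⟩
    simp only [Part.mem_map_iff] at htrue
    obtain ⟨st, hst, hdec⟩ := htrue
    exact ⟨n, st, hst, of_decide_eq_true hdec⟩
  · rintro ⟨k, st, hst, hy⟩
    refine ⟨k, ?_, ?_⟩
    · simp only [Part.mem_map_iff]
      exact ⟨st, hst, decide_eq_true hy⟩
    · intro m hm
      have hdk : (states i k).Dom := Part.dom_iff_mem.2 ⟨st, hst⟩
      have hd := states_dom_mono (le_of_lt hm) hdk
      exact Part.dom_iff_mem.2 ⟨_, Part.mem_map _ (Part.get_mem hd)⟩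

noncomputable def enumC : Code := (exists_code.1 psiPartrec).choose

lemma enumC_eval : enumC.eval = psi := (exists_code.1 psiPartrec).choose_spec

noncomputable def eIdx (j : ℕ) : ℕ := Encodable.encode (enumC.curry j)

lemma Wset_eIdx (j : ℕ) : Wset (eIdx j) = content (Ttext j) := by
  ext y
  have hphi : phi (eIdx j) = (enumC.curry j).eval := by
    rw [phi, eIdx, Denumerable.ofNat_encode]
  show (phi (eIdx j) y).Dom ↔ _
  rw [hphi, eval_curry, enumC_eval]
  rw [show (psi (Nat.pair j y)).Dom ↔ _ from psi_dom, content_Ttext]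
  rfl

noncomputable def tdOut : ℕ → ℕ
  | 0 => 0
  | y + 1 => (if y.unpair.1 = 0 then eIdx y.unpair.2 else eIdx y.unpair.2.unpair.1) + 1

noncomputable def tdLearner : Learner := fun d => Part.some (tdOut d)

lemma tdLearner_partrec : PartComputable tdLearner := by
  have heIdx : Primrec eIdx :=
    Primrec.encode.comp (primrec₂_curry.comp (Primrec.const enumC) Primrec.id)
  have hcases : Primrec fun y : ℕ =>
      (if y.unpair.1 = 0 then eIdx y.unpair.2 else eIdx y.unpair.2.unpair.1) + 1 :=
    Primrec.succ.comp (Primrec.ite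
      (Primrec.eq.comp (Primrec.fst.comp Primrec.unpair) (Primrec.const 0))
      (heIdx.comp (Primrec.snd.comp Primrec.unpair))
      (heIdx.comp (Primrec.fst.comp (Primrec.unpair.comp (Primrec.snd.comp Primrec.unpair)))))
  have h : Computable tdOut := by
    have := Primrec.nat_casesOn (f := @id ℕ) (g := fun _ : ℕ => 0)
      (h := fun (_ : ℕ) (y : ℕ) =>
        (if y.unpair.1 = 0 then eIdx y.unpair.2 else eIdx y.unpair.2.unpair.1) + 1)
      Primrec.id (Primrec.const 0) (hcases.comp Primrec.snd).to₂
    exact (this.of_eq fun n => by cases n <;> rfl).to_comp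
  have : Partrec tdLearner := h.partrec
  exact Partrec.nat_iff.1 this

lemma special_mem (j : ℕ) : special j ∈ content (Ttext j) := by
  rw [content_Ttext]
  exact ⟨0, stInit j, Part.mem_some _, by simp [stInit]⟩

lemma tdOut_elem {j x : ℕ} (hx : x ∈ content (Ttext j)) :
    tdOut (Encodable.encode (some x)) = eIdx j + 1 := by
  have henc : Encodable.encode (some x) = x + 1 := by
    simp [Encodable.encode_some]
  rw [henc]
  rw [content_Ttext] at hx
  obtain ⟨k, st, hst, hmem⟩ := hx
  rcases mem_states_elem hst hmem with rfl | ⟨m, _, rfl⟩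
  · simp [tdOut, special, Nat.unpair_pair]
  · simp [tdOut, filler, Nat.unpair_pair]

lemma tdop_step (T : Text) (n : ℕ) :
    Tdop tdLearner T (n + 1) = match tdOut (Encodable.encode (T n)) with
      | 0 => Tdop tdLearner T n
      | e + 1 => Part.some e := by
  rw [Tdop, tdLearner, Part.bind_some]

theorem td_learns (j : ℕ) : Learns Tdop ExW tdLearner (content (Ttext j)) := by
  intro T hT
  have hsp : special j ∈ content T := hT ▸ special_mem j
  obtain ⟨n₁, hn₁⟩ := hsp
  have key : ∀ n, Tdop tdLearner T (n₁ + 1 + n) = Part.some (eIdx j) := by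
    intro n
    induction n with
    | zero =>
        have hmx : special j ∈ content T := ⟨n₁, hn₁⟩
        rw [hT] at hmx
        rw [show n₁ + 1 + 0 = n₁ + 1 from rfl, tdop_step, hn₁, tdOut_elem hmx]
    | succ n ih =>
        rw [show n₁ + 1 + (n + 1) = (n₁ + 1 + n) + 1 from rfl, tdop_step]
        cases hTn : T (n₁ + 1 + n) with
        | none => simpa [tdOut] using ih
        | some x =>
            have hx : x ∈ content T := ⟨_, hTn⟩
            rw [hT] at hx
            rw [tdOut_elem hx]
  refine ⟨n₁ + 1, fun n hn => ?_, eIdx j, ?_, ?_⟩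
  · obtain ⟨d, rfl⟩ := Nat.exists_eq_add_of_le hn
    rw [key d, show n₁ + 1 = n₁ + 1 + 0 from rfl, key 0]
  · rw [show n₁ + 1 = n₁ + 1 + 0 from rfl, key 0]
  · rw [Wset_eIdx, hT]

lemma stInit_mem (i : ℕ) : stInit i ∈ states i 0 := Part.mem_some _

lemma mem_states_le {i k y : ℕ} {st : St} (h : st ∈ states i k) (hy : some y ∈ st.1)
    {st' : St} (h' : st' ∈ states i (y + 1)) : some y ∈ st'.1 := by
  rcases mem_states_elem h hy with rfl | ⟨m, _, rfl⟩
  · exact (states_prefix (stInit_mem i) h' (Nat.zero_le _)).subset (by simp [stInit])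
  · have hm : m + 1 ≤ filler i m + 1 := by
      have h1 : m ≤ Nat.pair i m := Nat.right_le_pair i m
      have h2 : Nat.pair i m ≤ filler i m := Nat.right_le_pair 1 (Nat.pair i m)
      omega
    have hdom : (states i (m + 1)).Dom :=
      states_dom_mono hm (Part.dom_iff_mem.2 ⟨st', h'⟩)
    obtain ⟨st₁, hst₁⟩ := Part.dom_iff_mem.1 hdom
    exact (states_prefix hst₁ h' hm).subset (filler_mem_early h hy hst₁)

theorem recLang_Ttext (i : ℕ) : RecLang (content (Ttext i)) := by
  classical
  by_cases hA : ∀ k, (states i k).Dom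
  · -- no stage stalls: decide membership by running the construction
    refine ⟨fun y => decide (some y ∈ ((states i (y + 1)).get (hA _)).1), ?_, ?_⟩
    · have hF : Partrec fun y : ℕ => (states i (y + 1)).map
          fun st => decide (some y ∈ st.1) :=
        (statesPartrec.comp (Computable.const i |>.pair
          (Computable.succ.comp Computable.id))).map
          ((computable_mem.comp Computable.fst
            (Computable.fst.comp Computable.snd)).to₂)
      apply Partrec.of_eq_tot hF
      intro y
      exact Part.mem_map _ (Part.get_mem (hA (y + 1)))
    · intro y
      rw [content_Ttext]
      simp only [Set.mem_setOf_eq, decide_eq_true_eq]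
      constructor
      · rintro ⟨k, st, hst, hy⟩
        exact mem_states_le hst hy (Part.get_mem (hA (y + 1)))
      · intro hy
        exact ⟨y + 1, _, Part.get_mem (hA (y + 1)), hy⟩
  · -- the construction stalls: the language is a fixed finite set
    push_neg at hA
    have hk₁ := Nat.find_spec hA
    set k₁ := Nat.find hA with hk₁def
    have hk₁pos : k₁ ≠ 0 := by
      intro h0
      rw [h0] at hk₁
      exact hk₁ trivial
    have hklt : (states i (k₁ - 1)).Dom := by
      have := Nat.find_min hA (m := k₁ - 1) (by omega)
      simpa using this
    set st := (states i (k₁ - 1)).get hklt with hstdef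
    have hst : st ∈ states i (k₁ - 1) := Part.get_mem hklt
    have hbound : ∀ (k : ℕ) (st' : St), st' ∈ states i k → st'.1 <+: st.1 := by
      intro k st' hst'
      rcases le_or_gt k (k₁ - 1) with hk | hk
      · exact states_prefix hst' hst hk
      · exfalso
        exact hk₁ (states_dom_mono (by omega) (Part.dom_iff_mem.2 ⟨st', hst'⟩))
    have hcontent : content (Ttext i) = {y | some y ∈ st.1} := by
      rw [content_Ttext]
      ext y
      constructor
      · rintro ⟨k, st', hst', hy⟩
        exact (hbound k st' hst').subset hy
      · intro hy
        exact ⟨k₁ - 1, st, hst, hy⟩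
    refine ⟨fun y => decide (some y ∈ st.1),
      computable_mem.comp Computable.id (Computable.const st.1), ?_⟩
    intro y
    rw [hcontent]
    simp

lemma initSeg_succ (T : Text) (n : ℕ) :
    initSeg T (n + 1) = initSeg T n ++ [T n] := by
  simp [initSeg, List.range_succ]

lemma padded_length (st : St) (k : ℕ) : (padded st k).length = st.1.length + k := by
  simp [padded]

theorem diag {h : Learner} (hpc : Nat.Partrec h) :
    ∃ i, ¬ ExC (Gop h (Ttext i)) (Ttext i) := by
  obtain ⟨c, hc⟩ := exists_code.1 hpc
  refine ⟨Encodable.encode c, ?_⟩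
  set i := Encodable.encode c with hidef
  have hphi : phi i = h := by rw [phi, hidef, Denumerable.ofNat_encode, hc]
  rintro ⟨n₀, hconv, e, hn₀, hCI, hCset⟩
  by_cases hA : ∀ k, (states i k).Dom
  · -- Case A: the construction never stalls
    obtain ⟨st₁, hst₁⟩ := Part.dom_iff_mem.1 (hA (n₀ + 1))
    obtain ⟨st₀, h₀, hstage⟩ := mem_states_succ.1 hst₁
    obtain ⟨u, v, hcond, hnext⟩ := stage_mem hstage
    rw [condFn] at hcond
    obtain ⟨e', he', hev⟩ := Option.bind_eq_some_iff.1 hcond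
    set t := u.unpair.1
    set k' := u.unpair.2
    set x := filler i st₀.2 with hxdef
    have hx2 : st₀.2 = n₀ := states_counter h₀
    have hlen : n₀ < st₀.1.length := states_length h₀
    set n := st₀.1.length + k' with hndef
    have hpadpre : padded st₀ k' <+: st₁.1 := by
      rw [hnext]
      exact List.prefix_append _ _
    have hinit : initSeg (Ttext i) n = padded st₀ k' := by
      have hle : n ≤ st₁.1.length := by
        have := hpadpre.length_le
        rw [padded_length] at this
        omega
      rw [initSeg_states hst₁ hle]
      have h5 := List.prefix_iff_eq_take.1 hpadpre
      have hlen2 : (padded st₀ k').length = n := by rw [padded_length]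
      rw [← hlen2, ← h5]
    have hGn : e' ∈ Gop h (Ttext i) n := by
      rw [Gop, hinit, ← hphi]
      exact evaln_sound (Option.mem_def.2 he')
    have hee : e' = e := by
      have hge : n₀ ≤ n := by omega
      rw [hconv n hge, hn₀] at hGn
      exact Part.mem_some_iff.1 hGn
    subst hee
    have hvmem : v ∈ phi e' x := evaln_sound (Option.mem_def.2 hev)
    by_cases hv : v = 0
    · subst hv
      have hxmem : some x ∈ st₁.1 := by
        rw [hnext]
        simp [nextSt, hxdef]
      have hxL : x ∈ content (Ttext i) := by
        rw [content_Ttext]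
        exact ⟨n₀ + 1, st₁, hst₁, hxmem⟩
      rw [← hCset] at hxL
      have : phi e' x = Part.some 1 := hxL
      rw [this] at hvmem
      exact absurd (Part.mem_some_iff.1 hvmem) (by omega)
    · rcases hCI x with h0 | h1
      · rw [h0] at hvmem
        exact hv (Part.mem_some_iff.1 hvmem)
      · have hxC : x ∈ Cset e' := h1
        rw [hCset, content_Ttext] at hxC
        obtain ⟨k, st', hst', hy⟩ := hxC
        have hmem1 : some x ∈ st₁.1 := by
          rw [hxdef, hx2] at hy ⊢
          exact filler_mem_early hst' hy hst₁
        rw [hnext] at hmem1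
        simp only [nextSt, padded, List.append_assoc, List.mem_append,
          List.mem_singleton, List.mem_replicate, if_neg hv] at hmem1
        rcases hmem1 with hm | hm | hm
        · rcases mem_states_elem h₀ hm with hsp | ⟨m, hmlt, hfe⟩
          · exact filler_ne_special hsp
          · rw [hxdef, hx2] at hfe
            exact absurd (filler_inj hfe) (by omega)
        · simp at hm
        · simp at hm
  · -- Case B: the construction stalls
    push_neg at hA
    classical
    have hk₁ := Nat.find_spec hA
    set k₁ := Nat.find hA with hk₁def
    have hk₁pos : k₁ ≠ 0 := by
      intro h0
      rw [h0] at hk₁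
      exact hk₁ trivial
    have hklt : (states i (k₁ - 1)).Dom := by
      have := Nat.find_min hA (m := k₁ - 1) (by omega)
      simpa using this
    set st := (states i (k₁ - 1)).get hklt with hstdef
    have hst : st ∈ states i (k₁ - 1) := Part.get_mem hklt
    have hnostage : ∀ u v, condFn i st u ≠ some v := by
      intro u v hcv
      have hdom : (stage i st).Dom := stage_dom.2 ⟨u, v, hcv⟩
      obtain ⟨st', hst'⟩ := Part.dom_iff_mem.1 hdom
      have : st' ∈ states i k₁ := by
        rw [show k₁ = (k₁ - 1) + 1 by omega]
        exact mem_states_succ.2 ⟨st, hst, hst'⟩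
      exact hk₁ (Part.dom_iff_mem.2 ⟨st', this⟩)
    have hbound : ∀ (k : ℕ) (st' : St), st' ∈ states i k → st'.1 <+: st.1 := by
      intro k st' hst'
      rcases le_or_gt k (k₁ - 1) with hk | hk
      · exact states_prefix hst' hst hk
      · exfalso
        exact hk₁ (states_dom_mono (by omega) (Part.dom_iff_mem.2 ⟨st', hst'⟩))
    have hTnone : ∀ n, st.1.length ≤ n → Ttext i n = none := by
      intro n hn
      apply Ttext_none
      intro k st' hst'
      exact le_trans (hbound k st' hst').length_le hn
    have hinitpad : ∀ d, initSeg (Ttext i) (st.1.length + d) = padded st d := by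
      intro d
      induction d with
      | zero =>
          rw [Nat.add_zero, initSeg_states hst (le_refl _), List.take_length]
          simp [padded]
      | succ d ih =>
          rw [show st.1.length + (d + 1) = (st.1.length + d) + 1 from rfl,
            initSeg_succ, ih, hTnone _ (by omega)]
          simp [padded, List.replicate_succ']
      -- padded st (d+1) = st.1 ++ replicate (d+1) none
    have hcontent : content (Ttext i) = {y | some y ∈ st.1} := by
      rw [content_Ttext]
      ext y
      constructor
      · rintro ⟨k, st', hst', hy⟩
        exact (hbound k st' hst').subset hy
      · intro hy
        exact ⟨k₁ - 1, st, hst, hy⟩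
    set x := filler i st.2 with hxdef
    have hxnot : x ∉ content (Ttext i) := by
      rw [hcontent]
      intro hx
      rcases mem_states_elem hst hx with hsp | ⟨m, hmlt, hfe⟩
      · exact filler_ne_special hsp
      · rw [hxdef, states_counter hst] at hfe
        exact absurd (filler_inj hfe) (by omega)
    have hphi0 : phi e x = Part.some 0 := by
      rcases hCI x with h0 | h1
      · exact h0
      · exact absurd (hCset ▸ (h1 : x ∈ Cset e)) hxnot
    obtain ⟨t₂, ht₂⟩ := evaln_complete.1 (show (0:ℕ) ∈ phi e x by rw [hphi0]; exact Part.mem_some _)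
    set n := max n₀ st.1.length with hndef
    set d := n - st.1.length with hddef
    have hGn : Gop h (Ttext i) n = Part.some e := by
      rw [hconv n (le_max_left _ _), hn₀]
    have hemem : e ∈ phi i (Encodable.encode (padded st d)) := by
      rw [hphi]
      have h6 : initSeg (Ttext i) n = padded st d := by
        rw [← hinitpad d]
        congr 1
        omega
      have h7 : h (Encodable.encode (padded st d)) = Part.some e := by
        rw [← h6]
        exact hGn
      rw [h7]
      exact Part.mem_some _
    obtain ⟨t₁, ht₁⟩ := evaln_complete.1 hemem
    apply hnostage (Nat.pair (max t₁ t₂) d) 0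
    rw [condFn, Nat.unpair_pair]
    have h1 : evaln (max t₁ t₂) (Denumerable.ofNat Code i)
        (Encodable.encode (padded st d)) = some e :=
      evaln_mono (le_max_left _ _) ht₁
    have h2 : evaln (max t₁ t₂) (Denumerable.ofNat Code e) x = some 0 :=
      evaln_mono (le_max_right _ _) ht₂
    simp only [h1, Option.bind_some]
    exact h2

end SepProof


/-- There is a class of recursive languages `Ex_W`-learnable by a transductive
learner but `Ex_C`-learnable by no Gold-style learner. -/
theorem td_exW_not_g_exC :
    ∃ ℒ : Set (Set ℕ),
      ℒ ∈ LearnableREC PartComputable Tdop ExW ∧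
      ℒ ∉ LearnableREC PartComputable Gop ExC := by
  refine ⟨Set.range (fun i => content (SepProof.Ttext i)), ⟨?_, SepProof.tdLearner,
    SepProof.tdLearner_partrec, ?_⟩, ?_⟩
  · rintro L ⟨i, rfl⟩
    exact SepProof.recLang_Ttext i
  · rintro L ⟨j, rfl⟩
    exact SepProof.td_learns j
  · rintro ⟨-, h, hpc, hlearn⟩
    obtain ⟨i, hno⟩ := SepProof.diag hpc
    exact hno (hlearn _ ⟨i, rfl⟩ (SepProof.Ttext i) rfl)

end InductiveInference
end

section
/- For each choice of δ, δ' ∈ {CInd, T} (where T denotes the always-true restriction): [τ(δ)TxtGδ'Ex_C]_REC = [τ(δ)ℛTxtPsdδ'Ex_C]_REC; that is, a class of recursive languages is τ(δ)δ'Ex_C-learnable by a partial computable Gold-style (full-information) learner if and only if it is τ(δ)δ'Ex_C-learnable by a total computable partially set-driven learner. -/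
namespace InductiveInference

/-! ## Auxiliary development -/

open Nat.Partrec (Code)
open Nat.Partrec.Code

/-! ### Basic facts about texts and segments -/

lemma cindex_zero : CIndex 0 := by
  intro x
  left
  have h0 : (Denumerable.ofNat Nat.Partrec.Code 0) = Nat.Partrec.Code.zero := by
    have h : Encodable.encode Nat.Partrec.Code.zero = 0 := rfl
    rw [← h, Denumerable.ofNat_encode]
  rw [phi, h0]
  rfl

lemma initSeg_length (T : Text) (n : ℕ) : (initSeg T n).length = n := by
  simp [initSeg]

lemma initSeg_take (T : Text) {j i : ℕ} (h : j ≤ i) :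
    (initSeg T i).take j = initSeg T j := by
  simp [initSeg, ← List.map_take, List.take_range, Nat.min_eq_left h]

lemma initSeg_prefix (T : Text) {j i : ℕ} (h : j ≤ i) :
    initSeg T j <+: initSeg T i := by
  rw [← initSeg_take T h]; exact List.take_prefix _ _

lemma mem_initSeg {T : Text} {i : ℕ} {o : Option ℕ} :
    o ∈ initSeg T i ↔ ∃ j < i, T j = o := by
  simp [initSeg, List.mem_map]

lemma mem_fincontent {T : Text} {i x : ℕ} :
    x ∈ fincontent T i ↔ ∃ j < i, T j = some x := by
  simp [fincontent, List.mem_toFinset, List.mem_filterMap, mem_initSeg]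

lemma fincontent_subset {T : Text} {i x : ℕ} (h : x ∈ fincontent T i) :
    x ∈ content T := by
  obtain ⟨j, _, hj⟩ := mem_fincontent.1 h; exact ⟨j, hj⟩

lemma mem_initSeg_content {T : Text} {i x : ℕ} (h : some x ∈ initSeg T i) :
    x ∈ content T := by
  obtain ⟨j, _, hj⟩ := mem_initSeg.1 h; exact ⟨j, hj⟩

lemma arrival {T : Text} {x : ℕ} (h : x ∈ content T) :
    ∃ n, ∀ i, n ≤ i → x ∈ fincontent T i := by
  obtain ⟨j, hj⟩ := h
  exact ⟨j + 1, fun i hi => mem_fincontent.2 ⟨j, hi, hj⟩⟩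

lemma list_arrival {T : Text} (s : List ℕ) (h : ∀ x ∈ s, x ∈ content T) :
    ∃ n, ∀ i, n ≤ i → ∀ x ∈ s, x ∈ fincontent T i := by
  induction s with
  | nil => exact ⟨0, by simp⟩
  | cons a s ih =>
    obtain ⟨n₁, hn₁⟩ := ih (fun x hx => h x (List.mem_cons_of_mem a hx))
    obtain ⟨n₂, hn₂⟩ := arrival (h a List.mem_cons_self)
    refine ⟨max n₁ n₂, fun i hi x hx => ?_⟩
    rcases List.mem_cons.1 hx with rfl | hx
    · exact hn₂ i (le_trans (le_max_right _ _) hi)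
    · exact hn₁ i (le_trans (le_max_left _ _) hi) x hx

/-! ### Extending a finite sequence to a text -/

/-- The text starting with `σ` and continuing with `T`. -/
def extendText (σ : List (Option ℕ)) (T : Text) : Text := fun n =>
  if h : n < σ.length then σ[n] else T (n - σ.length)

lemma initSeg_extendText (σ : List (Option ℕ)) (T : Text) :
    initSeg (extendText σ T) σ.length = σ := by
  apply List.ext_getElem (by simp [initSeg_length])
  intro i h1 h2
  simp only [initSeg, List.getElem_map, List.getElem_range, extendText]
  rw [dif_pos h2]

lemma content_extendText (σ : List (Option ℕ)) (T : Text) :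
    content (extendText σ T) = {x | some x ∈ σ} ∪ content T := by
  ext x
  constructor
  · rintro ⟨n, hn⟩
    by_cases h : n < σ.length
    · left
      simp only [extendText, dif_pos h] at hn
      simp only [Set.mem_setOf_eq]
      exact hn ▸ List.getElem_mem h
    · right
      refine ⟨n - σ.length, ?_⟩
      simpa only [extendText, dif_neg h] using hn
  · rintro (h | ⟨n, hn⟩)
    · obtain ⟨i, hi, hig⟩ := List.mem_iff_getElem.1 h
      exact ⟨i, by simp [extendText, dif_pos hi, hig]⟩
    · refine ⟨n + σ.length, ?_⟩
      have h : ¬ (n + σ.length < σ.length) := by omega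
      simp only [extendText, dif_neg h, Nat.add_sub_cancel]
      exact hn

open Classical in
/-- A canonical (noncomputable) text for an arbitrary language. -/
noncomputable def textOf (L : Set ℕ) : Text := fun n =>
  if n ∈ L then some n else none

lemma content_textOf (L : Set ℕ) : content (textOf L) = L := by
  ext x
  simp only [content, Set.mem_setOf_eq]
  constructor
  · rintro ⟨n, hn⟩
    simp only [textOf] at hn
    split_ifs at hn with h
    · obtain rfl := Option.some_inj.1 hn
      exact h
  · intro hx
    exact ⟨x, by simp [textOf, if_pos hx]⟩

lemma exists_text_extend (σ : List (Option ℕ)) (L : Set ℕ)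
    (h : ∀ x, some x ∈ σ → x ∈ L) :
    ∃ T : Text, content T = L ∧ initSeg T σ.length = σ := by
  refine ⟨extendText σ (textOf L), ?_, initSeg_extendText σ _⟩
  rw [content_extendText, content_textOf]
  exact Set.union_eq_self_of_subset_left h

/-! ### Locking sequences -/

/-- `σ` is a locking sequence for the total hypothesis function `F` on `L`. -/
def IsLock (F : List (Option ℕ) → ℕ) (L : Set ℕ) (σ : List (Option ℕ)) : Prop :=
  (∀ x, some x ∈ σ → x ∈ L) ∧
    ∀ τ, σ <+: τ → (∀ x, some x ∈ τ → x ∈ L) → F τ = F σ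

/-- Hypothesis: `F` converges on every text for `L` to a correct C-index. -/
def ConvOn (F : List (Option ℕ) → ℕ) (L : Set ℕ) : Prop :=
  ∀ T : Text, content T = L →
    ∃ N e, (∀ i, N ≤ i → F (initSeg T i) = e) ∧ CIndex e ∧ Cset e = L

lemma lock_correct {F : List (Option ℕ) → ℕ} {L : Set ℕ} (hF : ConvOn F L)
    {σ : List (Option ℕ)} (h : IsLock F L σ) :
    CIndex (F σ) ∧ Cset (F σ) = L := by
  obtain ⟨T, hT, hseg⟩ := exists_text_extend σ L h.1
  obtain ⟨N, e, he, hci, hcs⟩ := hF T hT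
  set i := max N σ.length with hi
  have h1 : F (initSeg T i) = e := he i (le_max_left _ _)
  have h2 : F (initSeg T i) = F σ := by
    apply h.2
    · rw [← hseg]; exact initSeg_prefix T (le_max_right _ _)
    · intro x hx
      rw [← hT]; exact mem_initSeg_content hx
  rw [← h2, h1]; exact ⟨hci, hcs⟩

lemma textOf_some {L : Set ℕ} {k x : ℕ} (h : textOf L k = some x) : x ∈ L := by
  have hx : x ∈ content (textOf L) := ⟨k, h⟩
  rwa [content_textOf] at hx

lemma lock_exists {F : List (Option ℕ) → ℕ} {L : Set ℕ} (hF : ConvOn F L) :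
    ∃ σ, IsLock F L σ := by
  by_contra hno
  have hbad : ∀ σ : List (Option ℕ), ∃ τ, (∀ x, some x ∈ σ → x ∈ L) →
      (σ <+: τ ∧ (∀ x, some x ∈ τ → x ∈ L) ∧ F τ ≠ F σ) := by
    intro σ
    by_cases hσ : ∀ x, some x ∈ σ → x ∈ L
    · rcases Classical.em (∃ τ, σ <+: τ ∧ (∀ x, some x ∈ τ → x ∈ L) ∧ F τ ≠ F σ) with
        ⟨τ, h1, h2, h3⟩ | hA
      · exact ⟨τ, fun _ => ⟨h1, h2, h3⟩⟩
      · exfalso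
        apply hno
        refine ⟨σ, hσ, fun τ hp hc => ?_⟩
        by_contra hne
        exact hA ⟨τ, hp, hc, hne⟩
    · exact ⟨σ, fun h' => absurd h' hσ⟩
  choose g hg using hbad
  set T₀ : Text := textOf L with hT₀def
  let ρ : ℕ → List (Option ℕ) := fun k => Nat.rec [] (fun k ih => g (ih ++ [T₀ k])) k
  have hρ0 : ρ 0 = [] := rfl
  have hρs : ∀ k, ρ (k + 1) = g (ρ k ++ [T₀ k]) := fun k => rfl
  -- contents lie in L
  have hsub : ∀ k, ∀ x, some x ∈ ρ k → x ∈ L := by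
    intro k
    induction k with
    | zero => intro x hx; rw [hρ0] at hx; exact absurd hx List.not_mem_nil
    | succ k ih =>
      have haug : ∀ x, some x ∈ ρ k ++ [T₀ k] → x ∈ L := by
        intro x hx
        rcases List.mem_append.1 hx with hx | hx
        · exact ih x hx
        · rw [List.mem_singleton] at hx
          exact textOf_some (L := L) (k := k) (by rw [← hT₀def]; exact hx.symm)
      rw [hρs k]
      exact (hg (ρ k ++ [T₀ k]) haug).2.1
  have haug : ∀ k, ∀ x, some x ∈ ρ k ++ [T₀ k] → x ∈ L := by
    intro k x hx
    rcases List.mem_append.1 hx with hx | hx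
    · exact hsub k x hx
    · rw [List.mem_singleton] at hx
      exact textOf_some (L := L) (k := k) (by rw [← hT₀def]; exact hx.symm)
  have hstep : ∀ k, (ρ k ++ [T₀ k]) <+: ρ (k + 1) ∧ F (ρ (k + 1)) ≠ F (ρ k ++ [T₀ k]) := by
    intro k
    obtain ⟨h1, _, h3⟩ := hg (ρ k ++ [T₀ k]) (haug k)
    rw [hρs k]
    exact ⟨h1, h3⟩
  have hchain : ∀ k, ρ k <+: ρ (k + 1) := fun k =>
    (List.prefix_append _ _).trans (hstep k).1
  have hchain_le : ∀ {k m}, k ≤ m → ρ k <+: ρ m := by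
    intro k m h
    induction m, h using Nat.le_induction with
    | base => exact List.prefix_refl _
    | succ m _ ih => exact ih.trans (hchain m)
  have hlen : ∀ k, k ≤ (ρ k).length := by
    intro k
    induction k with
    | zero => exact Nat.zero_le _
    | succ k ih =>
      have h1 := (hstep k).1.length_le
      rw [List.length_append, List.length_cons, List.length_nil] at h1
      omega
  set T : Text := fun n => (ρ (n + 1)).getD n none with hTdef
  have hbound : ∀ n, n < (ρ (n + 1)).length := fun n =>
    lt_of_lt_of_le (Nat.lt_succ_self n) (hlen (n + 1))
  have hTval : ∀ n, T n = (ρ (n + 1))[n]'(hbound n) := fun n =>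
    List.getD_eq_getElem _ _ (hbound n)
  have hgetT : ∀ k n (hn : n < (ρ k).length), T n = (ρ k)[n]'hn := by
    intro k n hn
    rcases le_total (n + 1) k with h | h
    · rw [hTval n]
      exact (hchain_le h).getElem (hbound n)
    · rw [hTval n, ← (hchain_le h).getElem hn]
  have hinit : ∀ k n, n ≤ (ρ k).length → initSeg T n = (ρ k).take n := by
    intro k n hn
    apply List.ext_getElem
    · rw [initSeg_length, List.length_take]; omega
    · intro i h1 h2
      simp only [initSeg, List.getElem_map, List.getElem_range]
      rw [List.getElem_take]
      exact hgetT k i (lt_of_lt_of_le (lt_of_lt_of_le (by rw [List.length_take] at h2; omega : i < n) hn) le_rfl)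
  have hTL : content T = L := by
    ext x
    constructor
    · rintro ⟨n, hn⟩
      rw [hTval n] at hn
      exact hsub (n + 1) x (hn ▸ List.getElem_mem (hbound n))
    · intro hx
      have hT₀x : T₀ x = some x := by
        rw [hT₀def]; simp [textOf, if_pos hx]
      set p := (ρ x).length with hp
      have hplt : p < (ρ x ++ [T₀ x]).length := by simp [hp]
      have hpref := (hstep x).1
      have hplen : p < (ρ (x + 1)).length := lt_of_lt_of_le hplt hpref.length_le
      refine ⟨p, ?_⟩
      rw [hgetT (x + 1) p hplen, ← hpref.getElem hplt]
      rw [List.getElem_concat_length hp]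
      exact hT₀x
  obtain ⟨N, e, he, _, _⟩ := hF T hTL
  set σ' := ρ N ++ [T₀ N] with hσ'
  have h1 : σ' <+: ρ (N + 1) := (hstep N).1
  have hs1 : initSeg T σ'.length = σ' := by
    rw [hinit (N + 1) _ h1.length_le]
    exact (List.prefix_iff_eq_take.1 h1).symm
  have hs2 : initSeg T (ρ (N + 1)).length = ρ (N + 1) := by
    rw [hinit (N + 1) _ le_rfl, List.take_length]
  have hNσ' : N ≤ σ'.length := by
    rw [hσ', List.length_append, List.length_cons, List.length_nil]
    have := hlen N
    omega
  have e1 : F σ' = e := by rw [← hs1]; exact he _ hNσ'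
  have e2 : F (ρ (N + 1)) = e := by
    rw [← hs2]
    exact he _ (le_trans hNσ' h1.length_le)
  exact (hstep N).2 (e2.trans e1.symm)


/-! ### Step-bounded evaluation of the `G`-learner, made total -/

/-- Search downwards for the largest `j ≤ n` where `f` is defined. -/
def searchDown (f : ℕ → Option ℕ) : ℕ → Option ℕ
  | 0 => f 0
  | j + 1 => Option.casesOn (f (j + 1)) (searchDown f j) some

lemma searchDown_spec (f : ℕ → Option ℕ) (n : ℕ) :
    (searchDown f n = none ∧ ∀ j, j ≤ n → f j = none) ∨
    ∃ j, j ≤ n ∧ searchDown f n = f j ∧ (f j).isSome = true ∧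
      ∀ j', j < j' → j' ≤ n → f j' = none := by
  induction n with
  | zero =>
    cases h : f 0 with
    | none => exact Or.inl ⟨h, fun j hj => Nat.le_zero.1 hj ▸ h⟩
    | some v =>
      exact Or.inr ⟨0, le_refl 0, rfl, by simp [h], fun j' h1 h2 => absurd (lt_of_lt_of_le h1 h2) (lt_irrefl 0)⟩
  | succ n ih =>
    cases h : f (n + 1) with
    | none =>
      have hs : searchDown f (n + 1) = searchDown f n := by simp [searchDown, h]
      rcases ih with ⟨h1, h2⟩ | ⟨j, hj, h1, h2, h3⟩
      · refine Or.inl ⟨hs ▸ h1, fun j hj => ?_⟩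
        rcases eq_or_lt_of_le hj with rfl | h'
        · exact h
        · exact h2 j (Nat.lt_succ_iff.1 h')
      · refine Or.inr ⟨j, le_trans hj (Nat.le_succ n), hs ▸ h1, h2, fun j' hj1 hj2 => ?_⟩
        rcases eq_or_lt_of_le hj2 with rfl | h'
        · exact h
        · exact h3 j' hj1 (Nat.lt_succ_iff.1 h')
    | some v =>
      refine Or.inr ⟨n + 1, le_refl _, by simp [searchDown, h], by simp [h],
        fun j' h1 h2 => absurd (lt_of_lt_of_le h1 h2) (lt_irrefl _)⟩

/-- `take` implemented with `range`/`map` (primitively recursively). -/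
def take' (σ : List (Option ℕ)) (j : ℕ) : List (Option ℕ) :=
  (List.range j).map fun i => σ.getD i none

lemma take'_eq (σ : List (Option ℕ)) {j : ℕ} (h : j ≤ σ.length) :
    take' σ j = σ.take j := by
  induction j with
  | zero => simp [take']
  | succ j ih =>
    have hj : j < σ.length := h
    rw [take', List.range_succ, List.map_append, ← take', ih (le_of_lt hj),
      List.take_succ, List.getElem?_eq_getElem hj]
    simp only [List.map_cons, List.map_nil, Option.toList_some]
    rw [List.getD_eq_getElem σ none hj]

/-- Step-bounded evaluation of code `c` on the `j`-th prefix of `σ`. -/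
def evalnPref (c : Code) (σ : List (Option ℕ)) (j : ℕ) : Option ℕ :=
  Code.evaln (Encodable.encode σ + 1) c (Encodable.encode (take' σ j))

/-- The totalized `G`-learner given by code `c`. -/
def hv (c : Code) (σ : List (Option ℕ)) : ℕ :=
  (searchDown (evalnPref c σ) σ.length).getD 0

lemma encode_list_ge_length (l : List (Option ℕ)) :
    l.length ≤ Encodable.encode l := by
  induction l with
  | nil => simp
  | cons a l ih =>
    rw [Encodable.encode_list_cons, List.length_cons]
    exact le_trans (Nat.succ_le_succ ih) (Nat.succ_le_succ (Nat.right_le_pair _ _))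

lemma hv_spec (c : Code) (σ : List (Option ℕ)) :
    hv c σ = 0 ∨ ∃ σ', σ' <+: σ ∧
      eval c (Encodable.encode σ') = Part.some (hv c σ) := by
  rcases searchDown_spec (evalnPref c σ) σ.length with ⟨h1, _⟩ | ⟨j, hj, h1, h2, _⟩
  · left; simp [hv, h1]
  · obtain ⟨v, hv'⟩ := Option.isSome_iff_exists.1 h2
    right
    have hmem : v ∈ Code.evaln (Encodable.encode σ + 1) c (Encodable.encode (take' σ j)) := hv'
    have := Code.evaln_sound hmem
    refine ⟨σ.take j, List.take_prefix _ _, ?_⟩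
    have hval : hv c σ = v := by simp [hv, h1, hv']
    rw [hval, ← take'_eq σ hj]
    exact Part.eq_some_iff.2 this

lemma hv_eventually (c : Code) (T : Text) (e n₀ : ℕ)
    (h : ∀ n, n₀ ≤ n → eval c (Encodable.encode (initSeg T n)) = Part.some e) :
    ∃ i₁, ∀ i, i₁ ≤ i → hv c (initSeg T i) = e := by
  have he : e ∈ eval c (Encodable.encode (initSeg T n₀)) := by
    rw [h n₀ le_rfl]; exact Part.mem_some e
  obtain ⟨k₀, hk⟩ := Code.evaln_complete.1 he
  refine ⟨max n₀ k₀, fun i hi => ?_⟩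
  have hn₀i : n₀ ≤ i := le_trans (le_max_left _ _) hi
  have hk₀i : k₀ ≤ i := le_trans (le_max_right _ _) hi
  set σ := initSeg T i with hσ
  have hlen : σ.length = i := initSeg_length T i
  have hfn₀ : evalnPref c σ n₀ = some e := by
    have hb : k₀ ≤ Encodable.encode σ + 1 :=
      le_trans hk₀i (le_trans (hlen ▸ encode_list_ge_length σ) (Nat.le_succ _))
    have : take' σ n₀ = initSeg T n₀ := by
      rw [take'_eq σ (hlen ▸ hn₀i), hσ, initSeg_take T hn₀i]
    rw [evalnPref, this]
    exact Code.evaln_mono hb hk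
  rcases searchDown_spec (evalnPref c σ) σ.length with ⟨_, hall⟩ | ⟨j, hj, h1, h2, hmax⟩
  · rw [hall n₀ (hlen ▸ hn₀i)] at hfn₀; cases hfn₀
  · have hn₀j : n₀ ≤ j := by
      by_contra h'
      push_neg at h'
      rw [hmax n₀ h' (hlen ▸ hn₀i)] at hfn₀; cases hfn₀
    obtain ⟨v, hv'⟩ := Option.isSome_iff_exists.1 h2
    have hmem : v ∈ eval c (Encodable.encode (take' σ j)) := Code.evaln_sound hv'
    have htk : take' σ j = initSeg T j := by
      rw [take'_eq σ hj, hσ, initSeg_take T (hlen ▸ hj)]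
    rw [htk, h j hn₀j] at hmem
    have hve : v = e := Part.mem_some_iff.1 hmem
    simp [hv, h1, hv', hve]

/-! ### Primitive recursion helpers -/

lemma list_all_primrec {α β : Type} [Primcodable α] [Primcodable β]
    {f : α → List β} {p : α → β → Bool} (hf : Primrec f) (hp : Primrec₂ p) :
    Primrec fun a => (f a).all (p a) := by
  have hstep : Primrec₂ fun (a : α) (q : β × Bool) => p a q.1 && q.2 :=
    Primrec.and.comp (hp.comp Primrec.fst (Primrec.fst.comp Primrec.snd))
      (Primrec.snd.comp Primrec.snd)
  refine (Primrec.list_foldr hf (Primrec.const true) hstep).of_eq fun a => ?_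
  generalize f a = l
  induction l with
  | nil => rfl
  | cons b l ih => simp [List.all_cons, ih]

lemma list_findSome?_primrec {α β σ : Type} [Primcodable α] [Primcodable β] [Primcodable σ]
    {f : α → List β} {p : α → β → Option σ} (hf : Primrec f) (hp : Primrec₂ p) :
    Primrec fun a => (f a).findSome? (p a) := by
  have hstep : Primrec₂ fun (a : α) (q : β × Option σ) =>
      (Option.casesOn (p a q.1) q.2 some : Option σ) :=
    Primrec.option_casesOn (hp.comp Primrec.fst (Primrec.fst.comp Primrec.snd))
      (Primrec.snd.comp Primrec.snd) (Primrec.option_some.comp Primrec.snd).to₂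
  refine (Primrec.list_foldr hf (Primrec.const none) hstep).of_eq fun a => ?_
  generalize f a = l
  induction l with
  | nil => rfl
  | cons b l ih =>
    rw [List.foldr_cons, ih, List.findSome?_cons]
    cases p a b <;> rfl

lemma searchDown_eq_rec (f : ℕ → Option ℕ) (n : ℕ) :
    (Nat.rec (f 0) (fun j ih => Option.casesOn (f (j + 1)) ih some) n : Option ℕ) =
      searchDown f n := by
  induction n with
  | zero => rfl
  | succ n ih =>
    unfold searchDown
    rw [← ih]

lemma take'_primrec : Primrec₂ take' :=
  Primrec.list_map (Primrec.list_range.comp Primrec.snd)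
    ((Primrec.list_getD none).comp (Primrec.fst.comp Primrec.fst) Primrec.snd).to₂

lemma hv_primrec (c : Code) : Primrec (hv c) := by
  have hF : Primrec₂ (evalnPref c) :=
    (Code.primrec_evaln.comp
      (Primrec.pair
        (Primrec.pair (Primrec.succ.comp (Primrec.encode.comp Primrec.fst))
          (Primrec.const c))
        (Primrec.encode.comp take'_primrec))).to₂
  have hstep : Primrec₂ fun (σ : List (Option ℕ)) (q : ℕ × Option ℕ) =>
      (Option.casesOn (evalnPref c σ (q.1 + 1)) q.2 some : Option ℕ) :=
    Primrec.option_casesOn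
      (hF.comp Primrec.fst (Primrec.succ.comp (Primrec.fst.comp Primrec.snd)))
      (Primrec.snd.comp Primrec.snd) (Primrec.option_some.comp Primrec.snd).to₂
  have hs : Primrec fun σ : List (Option ℕ) => searchDown (evalnPref c σ) σ.length :=
    (Primrec.nat_rec' Primrec.list_length (hF.comp Primrec.id (Primrec.const 0))
      hstep).of_eq fun σ => searchDown_eq_rec _ _
  exact (Primrec.option_getD.comp hs (Primrec.const 0)).of_eq fun σ => rfl

/-! ### The total partially set-driven learner -/

def memB (D : List ℕ) (x : ℕ) : Bool := decide (List.idxOf x D < D.length)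

lemma memB_iff {D : List ℕ} {x : ℕ} : memB D x = true ↔ x ∈ D := by
  simp [memB, List.idxOf_lt_length_iff]

lemma memB_primrec : Primrec₂ memB :=
  (Primrec.nat_lt.comp (Primrec.list_idxOf.comp Primrec.snd Primrec.fst)
    (Primrec.list_length.comp Primrec.fst)).decide.to₂

def subB (D : List ℕ) (σ : List (Option ℕ)) : Bool :=
  σ.all fun o => Option.casesOn o true (memB D)

lemma subB_iff {D : List ℕ} {σ : List (Option ℕ)} :
    subB D σ = true ↔ ∀ x, some x ∈ σ → x ∈ D := by
  rw [subB, List.all_eq_true]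
  constructor
  · intro h x hx
    exact memB_iff.1 (h (some x) hx)
  · intro h o ho
    cases o with
    | none => rfl
    | some x => exact memB_iff.2 (h x ho)

lemma subB_primrec : Primrec₂ subB := by
  have : Primrec₂ fun (q : List ℕ × List (Option ℕ)) (o : Option ℕ) =>
      (Option.casesOn o true (memB q.1) : Bool) :=
    Primrec.option_casesOn Primrec.snd (Primrec.const true)
      (memB_primrec.comp (Primrec.fst.comp (Primrec.fst.comp Primrec.fst)) Primrec.snd).to₂
  exact (list_all_primrec Primrec.snd this).to₂

def prefB (σ τ : List (Option ℕ)) : Bool :=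
  decide (σ.length ≤ τ.length) && decide (take' τ σ.length = σ)

lemma prefB_iff {σ τ : List (Option ℕ)} : prefB σ τ = true ↔ σ <+: τ := by
  simp only [prefB, Bool.and_eq_true, decide_eq_true_eq]
  constructor
  · rintro ⟨h1, h2⟩
    rw [take'_eq τ h1] at h2
    exact h2 ▸ List.take_prefix _ _
  · intro h
    refine ⟨h.length_le, ?_⟩
    rw [take'_eq τ h.length_le]
    exact (List.prefix_iff_eq_take.1 h).symm

lemma prefB_primrec : Primrec₂ prefB :=
  (Primrec.and.comp
    (Primrec.nat_le.comp (Primrec.list_length.comp Primrec.fst)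
      (Primrec.list_length.comp Primrec.snd)).decide
    (Primrec.eq.comp
      (take'_primrec.comp Primrec.snd (Primrec.list_length.comp Primrec.fst))
      Primrec.fst).decide).to₂

/-- Test whether candidate `σ` is consistent with all small extensions. -/
def extB (c : Code) (D : List ℕ) (σ : List (Option ℕ)) (k : ℕ) : Bool :=
  Option.casesOn (Encodable.decode (α := List (Option ℕ)) k) true fun τ =>
    !(prefB σ τ && subB D τ) || decide (hv c τ = hv c σ)

/-- Candidate `σ` looks like a locking sequence for data `D` within bound `t`. -/
def goodB (c : Code) (D : List ℕ) (t : ℕ) (σ : List (Option ℕ)) : Bool :=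
  subB D σ && (List.range t).all (extB c D σ)

lemma goodB_iff {c : Code} {D : List ℕ} {t : ℕ} {σ : List (Option ℕ)} :
    goodB c D t σ = true ↔
      (∀ x, some x ∈ σ → x ∈ D) ∧ ∀ k, k < t → ∀ τ : List (Option ℕ),
        Encodable.decode k = some τ → σ <+: τ → (∀ x, some x ∈ τ → x ∈ D) →
          hv c τ = hv c σ := by
  rw [goodB, Bool.and_eq_true, subB_iff, List.all_eq_true]
  apply and_congr_right'
  constructor
  · intro h k hk τ hdec hp hs
    have h' := h k (List.mem_range.2 hk)
    rw [extB, hdec] at h'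
    rw [Bool.or_eq_true] at h'
    rcases h' with h' | h'
    · have ht : (prefB σ τ && subB D τ) = true := by
        rw [Bool.and_eq_true]
        exact ⟨prefB_iff.2 hp, subB_iff.2 hs⟩
      rw [ht] at h'
      cases h'
    · exact of_decide_eq_true h'
  · intro h k hk
    rw [extB]
    cases hdec : (Encodable.decode k : Option (List (Option ℕ))) with
    | none => rfl
    | some τ =>
      show (!(prefB σ τ && subB D τ) || decide (hv c τ = hv c σ)) = true
      by_cases hc : (prefB σ τ && subB D τ) = true
      · rw [Bool.and_eq_true] at hc
        have := h k (List.mem_range.1 hk) τ hdec (prefB_iff.1 hc.1) (subB_iff.1 hc.2)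
        rw [decide_eq_true this, Bool.or_true]
      · rw [Bool.eq_false_iff.2 hc]
        rfl

/-- One search step of the total Psd-learner. -/
def cand (c : Code) (D : List ℕ) (t : ℕ) (k : ℕ) : Option ℕ :=
  Option.casesOn (Encodable.decode (α := List (Option ℕ)) k) none fun σ =>
    bif goodB c D t σ then some (hv c σ) else none

/-- The total partially set-driven learner determined by code `c`. -/
def psdF (c : Code) (m : ℕ) : ℕ :=
  ((List.range m.unpair.2).findSome?
    (cand c ((Encodable.decode (α := List ℕ) m.unpair.1).getD []) m.unpair.2)).getD 0

lemma psdF_primrec (c : Code) : Primrec (psdF c) := by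
  have hhv := hv_primrec c
  have hextp : Primrec₂ fun (q : (List ℕ × ℕ) × List (Option ℕ)) (k : ℕ) =>
      extB c q.1.1 q.2 k := by
    have hg : Primrec₂ fun (x : ((List ℕ × ℕ) × List (Option ℕ)) × ℕ)
        (τ : List (Option ℕ)) =>
        (!(prefB x.1.2 τ && subB x.1.1.1 τ) || decide (hv c τ = hv c x.1.2) : Bool) := by
      have hσ : Primrec fun (y : (((List ℕ × ℕ) × List (Option ℕ)) × ℕ) × List (Option ℕ)) =>
          y.1.1.2 := Primrec.snd.comp (Primrec.fst.comp Primrec.fst)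
      have hD : Primrec fun (y : (((List ℕ × ℕ) × List (Option ℕ)) × ℕ) × List (Option ℕ)) =>
          y.1.1.1.1 := Primrec.fst.comp (Primrec.fst.comp (Primrec.fst.comp Primrec.fst))
      exact (Primrec.or.comp
        (Primrec.not.comp (Primrec.and.comp (prefB_primrec.comp hσ Primrec.snd)
          (subB_primrec.comp hD Primrec.snd)))
        (Primrec.eq.comp (hhv.comp Primrec.snd) (hhv.comp hσ)).decide).to₂
    exact (Primrec.option_casesOn (Primrec.decode.comp Primrec.snd)
      (Primrec.const true) hg).to₂
  have hgood : Primrec₂ fun (p : List ℕ × ℕ) (σ : List (Option ℕ)) =>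
      goodB c p.1 p.2 σ := by
    exact (Primrec.and.comp
      (subB_primrec.comp (Primrec.fst.comp Primrec.fst) Primrec.snd)
      (list_all_primrec (Primrec.list_range.comp (Primrec.snd.comp Primrec.fst))
        hextp)).to₂
  have hcand : Primrec₂ fun (p : List ℕ × ℕ) (k : ℕ) => cand c p.1 p.2 k := by
    have hg2 : Primrec₂ fun (x : (List ℕ × ℕ) × ℕ) (σ : List (Option ℕ)) =>
        (bif goodB c x.1.1 x.1.2 σ then some (hv c σ) else none : Option ℕ) :=
      (Primrec.cond (hgood.comp (Primrec.fst.comp Primrec.fst) Primrec.snd)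
        (Primrec.option_some.comp (hhv.comp Primrec.snd))
        (Primrec.const none)).to₂
    exact (Primrec.option_casesOn (Primrec.decode.comp Primrec.snd)
      (Primrec.const none) hg2).to₂
  have hD : Primrec fun m : ℕ => (Encodable.decode (α := List ℕ) m.unpair.1).getD [] :=
    Primrec.option_getD.comp
      (Primrec.decode.comp (Primrec.fst.comp Primrec.unpair)) (Primrec.const [])
  have ht : Primrec fun m : ℕ => m.unpair.2 := Primrec.snd.comp Primrec.unpair
  have hfind : Primrec fun m : ℕ => (List.range m.unpair.2).findSome?
      (cand c ((Encodable.decode (α := List ℕ) m.unpair.1).getD []) m.unpair.2) :=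
    list_findSome?_primrec (Primrec.list_range.comp ht)
      (hcand.comp (Primrec.pair (hD.comp Primrec.fst) (ht.comp Primrec.fst))
        Primrec.snd).to₂
  exact (Primrec.option_getD.comp hfind (Primrec.const 0)).of_eq fun m => rfl

/-! ### Convergence of the Psd learner -/

lemma findSome?_range {α : Type} (f : ℕ → Option α) {j₀ : ℕ} {v : α} (i : ℕ)
    (hj : j₀ < i) (hnone : ∀ j, j < j₀ → f j = none) (hval : f j₀ = some v) :
    (List.range i).findSome? f = some v := by
  induction i with
  | zero => omega
  | succ n ih =>
    rw [List.range_succ, List.findSome?_append]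
    rcases Nat.lt_succ_iff_lt_or_eq.1 hj with h | rfl
    · rw [ih h]; rfl
    · have h0 : (List.range j₀).findSome? f = none :=
        List.findSome?_eq_none_iff.2 fun x hx => hnone x (List.mem_range.1 hx)
      rw [h0, Option.none_or]
      simp [List.findSome?_cons, hval]

lemma combine_kill {Q : ℕ → ℕ → Prop} (m : ℕ)
    (h : ∀ j, j < m → ∃ n, ∀ i, n ≤ i → Q j i) :
    ∃ n, ∀ i, n ≤ i → ∀ j, j < m → Q j i := by
  induction m with
  | zero => exact ⟨0, fun i _ j hj => absurd hj (Nat.not_lt_zero j)⟩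
  | succ m ih =>
    obtain ⟨n1, hn1⟩ := ih fun j hj => h j (Nat.lt_succ_of_lt hj)
    obtain ⟨n2, hn2⟩ := h m (Nat.lt_succ_self m)
    refine ⟨max n1 n2, fun i hi j hj => ?_⟩
    rcases Nat.lt_succ_iff_lt_or_eq.1 hj with h' | rfl
    · exact hn1 i (le_trans (le_max_left _ _) hi) j h'
    · exact hn2 i (le_trans (le_max_right _ _) hi)

lemma setCode_decode (D : Finset ℕ) :
    (Encodable.decode (α := List ℕ) (setCode D)) = some (D.sort (· ≤ ·)) :=
  Encodable.encodek _

lemma psdF_converges (c : Code) {L : Set ℕ} (T : Text) (hT : content T = L)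
    (hF : ConvOn (hv c) L) :
    ∃ I e₀, CIndex e₀ ∧ Cset e₀ = L ∧
      ∀ i, I ≤ i → psdF c (Nat.pair (setCode (fincontent T i)) i) = e₀ := by
  classical
  obtain ⟨σs, hσs⟩ := lock_exists hF
  have hPex : ∃ j, ∃ σ : List (Option ℕ),
      Encodable.decode j = some σ ∧ IsLock (hv c) L σ :=
    ⟨Encodable.encode σs, σs, Encodable.encodek σs, hσs⟩
  set j₀ := Nat.find hPex with hj₀
  obtain ⟨σ₀, hdec₀, hlock₀⟩ := Nat.find_spec hPex
  set e₀ := hv c σ₀ with he₀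
  obtain ⟨hci, hcs⟩ := lock_correct hF hlock₀
  have hDmem : ∀ (i : ℕ) (x : ℕ),
      x ∈ (fincontent T i).sort (· ≤ ·) ↔ x ∈ fincontent T i :=
    fun i x => Finset.mem_sort _
  -- arrival of the content of σ₀
  obtain ⟨n₁, hn₁⟩ := list_arrival (T := T) (σ₀.filterMap id) (by
    intro x hx
    obtain ⟨o, ho, hid⟩ := List.mem_filterMap.1 hx
    exact hT ▸ hlock₀.1 x (hid ▸ ho))
  have hgood₀ : ∀ i, n₁ ≤ i →
      goodB c ((fincontent T i).sort (· ≤ ·)) i σ₀ = true := by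
    intro i hi
    rw [goodB_iff]
    constructor
    · intro x hx
      rw [hDmem]
      exact hn₁ i hi x (List.mem_filterMap.2 ⟨some x, hx, rfl⟩)
    · intro k _ τ _ hp hsubτ
      apply hlock₀.2 τ hp
      intro x hx
      exact hT ▸ fincontent_subset ((hDmem i x).1 (hsubτ x hx))
  have hkill : ∀ j, j < j₀ → ∃ n, ∀ i, n ≤ i →
      cand c ((fincontent T i).sort (· ≤ ·)) i j = none := by
    intro j hj
    cases hdec : (Encodable.decode j : Option (List (Option ℕ))) with
    | none => exact ⟨0, fun i _ => by rw [cand, hdec]⟩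
    | some σ =>
      by_cases hσL : ∀ x, some x ∈ σ → x ∈ L
      · have hnl : ¬ IsLock (hv c) L σ := fun hl =>
          Nat.find_min hPex hj ⟨σ, hdec, hl⟩
        have hbad : ∃ τ, σ <+: τ ∧ (∀ x, some x ∈ τ → x ∈ L) ∧ hv c τ ≠ hv c σ := by
          by_contra hA
          push_neg at hA
          exact hnl ⟨hσL, hA⟩
        obtain ⟨τ, hpτ, hcτ, hneτ⟩ := hbad
        obtain ⟨n₂, hn₂⟩ := list_arrival (T := T) (τ.filterMap id) (by
          intro x hx
          obtain ⟨o, ho, hid⟩ := List.mem_filterMap.1 hx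
          exact hT ▸ hcτ x (hid ▸ ho))
        refine ⟨max n₂ (Encodable.encode τ + 1), fun i hi => ?_⟩
        have hn₂i : n₂ ≤ i := le_trans (le_max_left _ _) hi
        have hτi : Encodable.encode τ < i :=
          lt_of_lt_of_le (Nat.lt_succ_self _) (le_trans (le_max_right _ _) hi)
        have hng : goodB c ((fincontent T i).sort (· ≤ ·)) i σ = false := by
          apply Bool.eq_false_iff.2
          intro hgt
          obtain ⟨_, h2⟩ := goodB_iff.1 hgt
          apply hneτ
          apply h2 (Encodable.encode τ) hτi τ (Encodable.encodek τ) hpτ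
          intro x hx
          rw [hDmem]
          exact hn₂ i hn₂i x (List.mem_filterMap.2 ⟨some x, hx, rfl⟩)
        rw [cand, hdec]
        show (bif goodB c ((fincontent T i).sort (· ≤ ·)) i σ
          then some (hv c σ) else none) = none
        rw [hng]
        rfl
      · push_neg at hσL
        obtain ⟨x, hxσ, hxL⟩ := hσL
        refine ⟨0, fun i _ => ?_⟩
        have hng : goodB c ((fincontent T i).sort (· ≤ ·)) i σ = false := by
          apply Bool.eq_false_iff.2
          intro hgt
          obtain ⟨h1, _⟩ := goodB_iff.1 hgt
          exact hxL (hT ▸ fincontent_subset ((hDmem i x).1 (h1 x hxσ)))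
        rw [cand, hdec]
        show (bif goodB c ((fincontent T i).sort (· ≤ ·)) i σ
          then some (hv c σ) else none) = none
        rw [hng]
        rfl
  obtain ⟨n₃, hn₃⟩ := combine_kill j₀ hkill
  refine ⟨max (max n₁ (j₀ + 1)) n₃, e₀, hci, hcs, fun i hi => ?_⟩
  have hn₁i : n₁ ≤ i := le_trans (le_trans (le_max_left _ _) (le_max_left _ _)) hi
  have hj₀i : j₀ < i :=
    lt_of_lt_of_le (Nat.lt_succ_self _)
      (le_trans (le_trans (le_max_right _ _) (le_max_left _ _)) hi)
  have hn₃i : n₃ ≤ i := le_trans (le_max_right _ _) hi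
  have hc₀ : cand c ((fincontent T i).sort (· ≤ ·)) i j₀ = some e₀ := by
    rw [cand, hdec₀]
    show (bif goodB c ((fincontent T i).sort (· ≤ ·)) i σ₀
      then some (hv c σ₀) else none) = some e₀
    rw [hgood₀ i hn₁i]
    rfl
  rw [psdF, Nat.unpair_pair]
  show ((List.range i).findSome?
    (cand c ((Encodable.decode (α := List ℕ) (setCode (fincontent T i))).getD []) i)).getD 0 = e₀
  rw [setCode_decode, Option.getD_some,
    findSome?_range _ i hj₀i (fun j hj => hn₃ i hn₃i j hj) hc₀]
  rfl

lemma psdF_cases (c : Code) (m : ℕ) : psdF c m = 0 ∨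
    ∃ σ : List (Option ℕ), (∀ x, some x ∈ σ →
        x ∈ (Encodable.decode (α := List ℕ) m.unpair.1).getD []) ∧
      psdF c m = hv c σ := by
  rw [psdF]
  cases hf : (List.range m.unpair.2).findSome?
      (cand c ((Encodable.decode (α := List ℕ) m.unpair.1).getD []) m.unpair.2) with
  | none => left; rfl
  | some v =>
    right
    obtain ⟨j, _, hj⟩ := List.exists_of_findSome?_eq_some hf
    rcases hcand : (Encodable.decode j : Option (List (Option ℕ))) with _ | σ
    · rw [cand, hcand] at hj
      cases hj
    · rw [cand, hcand] at hj
      have hj' : (bif goodB c ((Encodable.decode (α := List ℕ) m.unpair.1).getD [])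
          m.unpair.2 σ then some (hv c σ) else none) = some v := hj
      by_cases hgd : goodB c ((Encodable.decode (α := List ℕ) m.unpair.1).getD [])
          m.unpair.2 σ = true
      · refine ⟨σ, fun x hx => (goodB_iff.1 hgd).1 x hx, ?_⟩
        rw [hgd] at hj'
        simp only [cond_true, Option.some_inj] at hj'
        rw [Option.getD_some, ← hj']
      · rw [Bool.eq_false_iff.2 hgd] at hj'
        cases hj'
/-! ### Output-local restrictions -/

lemma outLocal {δ : Restriction} (hδ : δ = CIndRes ∨ δ = TrueRes) :
    ∃ P : ℕ → Prop, P 0 ∧ ∀ p T, δ p T ↔ ∀ i x, p i = Part.some x → P x := by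
  rcases hδ with rfl | rfl
  · exact ⟨CIndex, cindex_zero, fun p T => Iff.rfl⟩
  · exact ⟨fun _ => True, trivial, fun p T => by simp [TrueRes]⟩

/-! ### The hard direction: partial `G`-learners to total `Psd`-learners -/

lemma hard_direction {δ δ' : Restriction}
    (hδ : δ = CIndRes ∨ δ = TrueRes) (hδ' : δ' = CIndRes ∨ δ' = TrueRes)
    {ℒ : Set (Set ℕ)}
    (h : ℒ ∈ TauLearnableREC PartComputable δ Gop (andRes δ' ExC)) :
    ℒ ∈ TauLearnableREC TotalComputable δ Psdop (andRes δ' ExC) := by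
  obtain ⟨P, hP0, hP⟩ := outLocal hδ
  obtain ⟨P', hP'0, hP'⟩ := outLocal hδ'
  obtain ⟨hrec, h₀, hpc, hall, hlearn⟩ := h
  obtain ⟨c, hc⟩ := Nat.Partrec.Code.exists_code.1 hpc
  have hvalP : ∀ (σ' : List (Option ℕ)) (v : ℕ),
      eval c (Encodable.encode σ') = Part.some v → P v := by
    intro σ' v hev
    set T := extendText σ' (fun _ => none) with hTdef
    refine (hP (Gop h₀ T) T).1 (hall T) σ'.length v ?_
    show h₀ (Encodable.encode (initSeg T σ'.length)) = Part.some v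
    rw [hTdef, initSeg_extendText, ← hc]
    exact hev
  have hvalP' : ∀ L ∈ ℒ, ∀ (σ' : List (Option ℕ)) (v : ℕ),
      (∀ x, some x ∈ σ' → x ∈ L) →
      eval c (Encodable.encode σ') = Part.some v → P' v := by
    intro L hL σ' v hσ'L hev
    obtain ⟨T, hTc, hTseg⟩ := exists_text_extend σ' L hσ'L
    refine (hP' (Gop h₀ T) T).1 (hlearn L hL T hTc).1 σ'.length v ?_
    show h₀ (Encodable.encode (initSeg T σ'.length)) = Part.some v
    rw [hTseg, ← hc]
    exact hev
  have hconv : ∀ L ∈ ℒ, ConvOn (hv c) L := by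
    intro L hL T hTc
    obtain ⟨n₀, hstable, e, hn₀, hci, hcs⟩ := (hlearn L hL T hTc).2
    have hev : ∀ n, n₀ ≤ n →
        eval c (Encodable.encode (initSeg T n)) = Part.some e := by
      intro n hn
      rw [hc]
      exact (hstable n hn).trans hn₀
    obtain ⟨N, hN⟩ := hv_eventually c T e n₀ hev
    exact ⟨N, e, hN, hci, hTc ▸ hcs⟩
  refine ⟨hrec, fun m => Part.some (psdF c m), ⟨?_, fun _ => trivial⟩, ?_, ?_⟩
  · exact Partrec.nat_iff.1 ((psdF_primrec c).to_comp.partrec)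
  · -- the restriction δ on arbitrary texts
    intro T
    rw [hP]
    intro i x hx
    have hx' : psdF c (Nat.pair (setCode (fincontent T i)) i) = x := Part.some_inj.1 hx
    rcases psdF_cases c (Nat.pair (setCode (fincontent T i)) i) with h0 | ⟨σ, _, hvv⟩
    · rw [← hx', h0]; exact hP0
    · rcases hv_spec c σ with h0' | ⟨σ', _, hev⟩
      · rw [← hx', hvv, h0']; exact hP0
      · rw [← hx', hvv]
        exact hvalP σ' _ hev
  · -- learning each L ∈ ℒ
    intro L hL T hTc
    constructor
    · -- δ' on texts of L
      rw [hP']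
      intro i x hx
      have hx' : psdF c (Nat.pair (setCode (fincontent T i)) i) = x := Part.some_inj.1 hx
      rcases psdF_cases c (Nat.pair (setCode (fincontent T i)) i) with h0 | ⟨σ, hσD, hvv⟩
      · rw [← hx', h0]; exact hP'0
      · have hσL : ∀ y, some y ∈ σ → y ∈ L := by
          intro y hy
          have h1 := hσD y hy
          simp only [Nat.unpair_pair, setCode_decode, Option.getD_some] at h1
          exact hTc ▸ fincontent_subset ((Finset.mem_sort _).1 h1)
        rcases hv_spec c σ with h0' | ⟨σ', hpre, hev⟩
        · rw [← hx', hvv, h0']; exact hP'0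
        · rw [← hx', hvv]
          exact hvalP' L hL σ' _ (fun y hy => hσL y (hpre.subset hy)) hev
    · -- Ex_C convergence
      obtain ⟨I, e₀, hci, hcs, hconv'⟩ := psdF_converges c T hTc (hconv L hL)
      refine ⟨I, ?_, e₀, ?_, hci, ?_⟩
      · intro n hn
        show Part.some (psdF c (Nat.pair (setCode (fincontent T n)) n)) =
          Part.some (psdF c (Nat.pair (setCode (fincontent T I)) I))
        rw [hconv' n hn, hconv' I le_rfl]
      · show Part.some (psdF c (Nat.pair (setCode (fincontent T I)) I)) = Part.some e₀
        rw [hconv' I le_rfl]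
      · rw [hTc]; exact hcs

/-! ### The easy direction: total `Psd`-learners to partial `G`-learners -/

def optList (o : Option ℕ) : List ℕ := Option.casesOn o [] fun x => [x]

lemma flatMap_optList (σ : List (Option ℕ)) : σ.flatMap optList = σ.filterMap id := by
  induction σ with
  | nil => rfl
  | cons o σ ih => cases o <;> simp [List.flatMap_cons, optList, List.filterMap_cons, ih]

def filB (m : List ℕ) (b : ℕ) : List ℕ :=
  (List.range b).flatMap fun x => bif memB m x then [x] else []

lemma filB_eq (m : List ℕ) (b : ℕ) :
    filB m b = (List.range b).filter fun x => memB m x := by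
  rw [filB]
  generalize List.range b = l
  induction l with
  | nil => rfl
  | cons a l ih =>
    rw [List.flatMap_cons, List.filter_cons, ih]
    cases h : memB m a <;> simp [h]

def sdl (m : List ℕ) : List ℕ := filB m (m.foldr max 0 + 1)

lemma foldr_max_bound {m : List ℕ} {x : ℕ} (hx : x ∈ m) : x ≤ m.foldr max 0 := by
  induction m with
  | nil => cases hx
  | cons a l ih =>
    rw [List.foldr_cons]
    rcases List.mem_cons.1 hx with rfl | hx
    · exact le_max_left _ _
    · exact le_trans (ih hx) (le_max_right _ _)

lemma sdl_eq_sort (m : List ℕ) : sdl m = m.toFinset.sort (· ≤ ·) := by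
  rw [sdl, filB_eq]
  have hperm : List.Perm ((List.range (m.foldr max 0 + 1)).filter fun x => memB m x)
      (m.toFinset.sort (· ≤ ·)) := by
    apply (List.perm_ext_iff_of_nodup ((List.nodup_range).filter _)
      (Finset.sort_nodup _ _)).2
    intro x
    simp only [List.mem_filter, List.mem_range, Finset.mem_sort, List.mem_toFinset]
    constructor
    · rintro ⟨_, h⟩; exact memB_iff.1 h
    · intro h
      exact ⟨Nat.lt_succ_of_le (foldr_max_bound h), memB_iff.2 h⟩
  have hs1 : List.Pairwise (· ≤ ·)
      ((List.range (m.foldr max 0 + 1)).filter fun x => memB m x) :=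
    List.Pairwise.imp le_of_lt ((List.pairwise_lt_range).filter _)
  exact List.Perm.eq_of_pairwise' hs1 (Finset.pairwise_sort _ _) hperm

/-- Conversion of `G`-inputs to `Psd`-inputs. -/
def gF (n : ℕ) : ℕ :=
  Nat.pair
    (Encodable.encode (sdl
      (((Encodable.decode (α := List (Option ℕ)) n).getD []).flatMap optList)))
    ((Encodable.decode (α := List (Option ℕ)) n).getD []).length

lemma gF_primrec : Primrec gF := by
  have hσ : Primrec fun n : ℕ => (Encodable.decode (α := List (Option ℕ)) n).getD [] :=
    Primrec.option_getD.comp Primrec.decode (Primrec.const [])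
  have hoptList : Primrec optList :=
    Primrec.option_casesOn Primrec.id (Primrec.const [])
      (Primrec.list_cons.comp Primrec.snd (Primrec.const [])).to₂
  have hfm : Primrec fun n : ℕ =>
      ((Encodable.decode (α := List (Option ℕ)) n).getD []).flatMap optList :=
    Primrec.list_flatMap hσ (hoptList.comp Primrec.snd).to₂
  have hfilB : Primrec₂ filB :=
    (Primrec.list_flatMap (Primrec.list_range.comp Primrec.snd)
      ((Primrec.cond (memB_primrec.comp (Primrec.fst.comp Primrec.fst) Primrec.snd)
        (Primrec.list_cons.comp Primrec.snd (Primrec.const []))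
        (Primrec.const [])).to₂)).to₂
  have hfold : Primrec fun m : List ℕ => m.foldr max 0 :=
    Primrec.list_foldr Primrec.id (Primrec.const 0)
      (Primrec.nat_max.comp (Primrec.fst.comp Primrec.snd)
        (Primrec.snd.comp Primrec.snd)).to₂
  have hsdl : Primrec sdl :=
    hfilB.comp Primrec.id (Primrec.succ.comp hfold)
  exact Primrec.pair (Primrec.encode.comp (hsdl.comp hfm))
    (Primrec.list_length.comp hσ)

lemma gF_spec (T : Text) (i : ℕ) :
    gF (Encodable.encode (initSeg T i)) = Nat.pair (setCode (fincontent T i)) i := by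
  rw [gF, Encodable.encodek, Option.getD_some, flatMap_optList, sdl_eq_sort,
    initSeg_length]
  rfl

lemma easy_direction {δ δ'' : Restriction} {ℒ : Set (Set ℕ)}
    (h : ℒ ∈ TauLearnableREC TotalComputable δ Psdop δ'') :
    ℒ ∈ TauLearnableREC PartComputable δ Gop δ'' := by
  obtain ⟨hrec, h₂, ⟨hpc, _⟩, hall, hlearn⟩ := h
  have hseq : ∀ T : Text, Gop (fun n => h₂ (gF n)) T = Psdop h₂ T := by
    intro T
    funext i
    show h₂ (gF (Encodable.encode (initSeg T i))) = h₂ (Nat.pair (setCode (fincontent T i)) i)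
    rw [gF_spec]
  refine ⟨hrec, fun n => h₂ (gF n), ?_, ?_, ?_⟩
  · exact Partrec.nat_iff.1 (Partrec.comp (Partrec.nat_iff.2 hpc) gF_primrec.to_comp)
  · intro T
    rw [hseq T]
    exact hall T
  · intro L hL T hTc
    rw [hseq T]
    exact hlearn L hL T hTc
/-- For `δ, δ′ ∈ {CInd, T}`: `[τ(δ)TxtGδ′Ex_C]_REC = [τ(δ)ℛTxtPsdδ′Ex_C]_REC`. -/
theorem g_eq_total_psd (δ δ' : Restriction)
    (hδ : δ = CIndRes ∨ δ = TrueRes) (hδ' : δ' = CIndRes ∨ δ' = TrueRes) :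
    TauLearnableREC PartComputable δ Gop (andRes δ' ExC) =
      TauLearnableREC TotalComputable δ Psdop (andRes δ' ExC) := by
  ext ℒ
  exact ⟨hard_direction hδ hδ', easy_direction⟩

end InductiveInference
end

section
/- [ℛTxtSdCIndEx_C]_REC ⊊ [TxtSdCIndEx_C]_REC; that is, every class of recursive languages CIndEx_C-learnable by a total computable set-driven learner is CIndEx_C-learnable by a partial computable set-driven learner, and there exists a class of recursive languages CIndEx_C-learnable by a partial computable set-driven learner but by no total computable set-driven learner. -/
namespace InductiveInference

/- ======================================================================
   Auxiliary development for the separation theorem.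
   ====================================================================== -/

namespace Sep

open Nat.Partrec (Code)
open Nat.Partrec.Code
open Encodable

/-! ### A uniform boolean membership function on lists -/

def memB (l : List ℕ) (x : ℕ) : Bool := l.foldr (fun a acc => (a == x) || acc) false

lemma memB_eq (l : List ℕ) (x : ℕ) : memB l x = decide (x ∈ l) := by
  induction l with
  | nil => rfl
  | cons a l ih =>
    show (a == x || memB l x) = _
    rw [ih]
    by_cases h : x = a
    · subst h; simp [List.mem_cons]
    · have h2 : ¬ a = x := fun hh => h hh.symm
      simp [List.mem_cons, h, h2]

lemma memB_primrec : Primrec₂ memB := by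
  have h : Primrec fun r : (List ℕ × ℕ) × ℕ × Bool => (r.2.1 == r.1.2 || r.2.2) := by
    have hc : Primrec fun r : (List ℕ × ℕ) × ℕ × Bool => (r.2.1 == r.1.2) :=
      Primrec.beq.comp (Primrec.fst.comp Primrec.snd) (Primrec.snd.comp Primrec.fst)
    have := Primrec.cond hc (Primrec.const true) (Primrec.snd.comp Primrec.snd)
    exact this.of_eq fun r => by cases hh : (r.2.1 == r.1.2) <;> simp [hh]
  have H := Primrec.list_foldr (Primrec.fst (α := List ℕ) (β := ℕ))
    (Primrec.const false) h.to₂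
  exact (H.of_eq fun p => rfl).to₂

lemma mem_primrecPred : PrimrecPred fun p : ℕ × ℕ => p.2 ∈ (decode (α := List ℕ) p.1).getD [] := by
  have hm : Primrec fun p : ℕ × ℕ => memB ((decode (α := List ℕ) p.1).getD []) p.2 :=
    memB_primrec.comp (Primrec.option_getD.comp (Primrec.decode.comp Primrec.fst)
      (Primrec.const [])) Primrec.snd
  exact Primrec.primrecPred (hm.of_eq fun p => memB_eq _ _)

/-! ### Canonical C-indices for finite sets and for columns -/

def gFin (n x : ℕ) : ℕ := if x ∈ (decode (α := List ℕ) n).getD [] then 1 else 0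

def gCol (k x : ℕ) : ℕ := if x.unpair.1 = k ∧ x.unpair.2 % 2 = 0 then 1 else 0

lemma gFin_primrec : Primrec₂ gFin :=
  (Primrec.ite mem_primrecPred (Primrec.const 1) (Primrec.const 0)).to₂

lemma gCol_primrec : Primrec₂ gCol := by
  have h1 : PrimrecPred fun p : ℕ × ℕ => p.2.unpair.1 = p.1 :=
    Primrec.eq.comp (Primrec.fst.comp (Primrec.unpair.comp Primrec.snd)) Primrec.fst
  have h2 : PrimrecPred fun p : ℕ × ℕ => p.2.unpair.2 % 2 = 0 :=
    Primrec.eq.comp (Primrec.nat_mod.comp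
      (Primrec.snd.comp (Primrec.unpair.comp Primrec.snd)) (Primrec.const 2))
      (Primrec.const 0)
  exact (Primrec.ite (h1.and h2) (Primrec.const 1) (Primrec.const 0)).to₂

lemma gFin_part : Nat.Partrec (fun m : ℕ => Part.some (gFin m.unpair.1 m.unpair.2)) := by
  have : Computable (fun m : ℕ => gFin m.unpair.1 m.unpair.2) :=
    gFin_primrec.to_comp.comp
      ((Primrec.fst.comp Primrec.unpair).to_comp) ((Primrec.snd.comp Primrec.unpair).to_comp)
  exact Partrec.nat_iff.1 this.partrec

lemma gCol_part : Nat.Partrec (fun m : ℕ => Part.some (gCol m.unpair.1 m.unpair.2)) := by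
  have : Computable (fun m : ℕ => gCol m.unpair.1 m.unpair.2) :=
    gCol_primrec.to_comp.comp
      ((Primrec.fst.comp Primrec.unpair).to_comp) ((Primrec.snd.comp Primrec.unpair).to_comp)
  exact Partrec.nat_iff.1 this.partrec

noncomputable def cFin : Code := Classical.choose (exists_code.1 gFin_part)

lemma cFin_spec : eval cFin = fun m : ℕ => Part.some (gFin m.unpair.1 m.unpair.2) :=
  Classical.choose_spec (exists_code.1 gFin_part)

noncomputable def cCol : Code := Classical.choose (exists_code.1 gCol_part)

lemma cCol_spec : eval cCol = fun m : ℕ => Part.some (gCol m.unpair.1 m.unpair.2) :=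
  Classical.choose_spec (exists_code.1 gCol_part)

noncomputable def finIdx (n : ℕ) : ℕ := encode (curry cFin n)

noncomputable def colIdx (k : ℕ) : ℕ := encode (curry cCol k)

lemma phi_encode (cd : Code) : phi (encode cd) = eval cd := by
  unfold phi; rw [Denumerable.ofNat_encode]

lemma phi_finIdx (n x : ℕ) : phi (finIdx n) x = Part.some (gFin n x) := by
  rw [finIdx, phi_encode, eval_curry, cFin_spec]
  simp

lemma phi_colIdx (k x : ℕ) : phi (colIdx k) x = Part.some (gCol k x) := by
  rw [colIdx, phi_encode, eval_curry, cCol_spec]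
  simp

lemma finIdx_computable : Computable finIdx := by
  have : Primrec fun n => encode (curry cFin n) :=
    Primrec.encode.comp (primrec₂_curry.comp (Primrec.const cFin) Primrec.id)
  exact this.to_comp

lemma colIdx_computable : Computable colIdx := by
  have : Primrec fun n => encode (curry cCol n) :=
    Primrec.encode.comp (primrec₂_curry.comp (Primrec.const cCol) Primrec.id)
  exact this.to_comp

lemma CIndex_finIdx (n : ℕ) : CIndex (finIdx n) := by
  intro x
  rw [phi_finIdx]
  unfold gFin
  by_cases h : x ∈ (decode (α := List ℕ) n).getD []
  · right; rw [if_pos h]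
  · left; rw [if_neg h]

lemma CIndex_colIdx (k : ℕ) : CIndex (colIdx k) := by
  intro x
  rw [phi_colIdx]
  unfold gCol
  by_cases h : x.unpair.1 = k ∧ x.unpair.2 % 2 = 0
  · right; rw [if_pos h]
  · left; rw [if_neg h]

lemma Cset_finIdx (l : List ℕ) : Cset (finIdx (encode l)) = {x | x ∈ l} := by
  ext x
  simp only [Cset, Set.mem_setOf_eq, phi_finIdx, Part.some_inj]
  unfold gFin
  rw [encodek]
  simp only [Option.getD_some]
  by_cases h : x ∈ l
  · rw [if_pos h]; simp [h]
  · rw [if_neg h]; simp [h]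

lemma Cset_colIdx (k : ℕ) : Cset (colIdx k) = {x | x.unpair.1 = k ∧ x.unpair.2 % 2 = 0} := by
  ext x
  simp only [Cset, Set.mem_setOf_eq, phi_colIdx, Part.some_inj]
  unfold gCol
  by_cases h : x.unpair.1 = k ∧ x.unpair.2 % 2 = 0
  · rw [if_pos h]; simp [h]
  · rw [if_neg h]; simp [h]

/-! ### The diagonal construction -/

def pt (k i : ℕ) : ℕ := Nat.pair k (2 * i)

def Dlist (k j : ℕ) : List ℕ := (List.range (j + 1)).map (pt k)

def Dfin (k j : ℕ) : Finset ℕ := (Dlist k j).toFinset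

def probe (k j : ℕ) : ℕ := pt k (j + 1)

/-- the marker -/
def mrk (k j : ℕ) : ℕ := Nat.pair k (2 * j + 1)

def col (k : ℕ) : Set ℕ := {x | ∃ i, x = pt k i}

def stepVal (k j : ℕ) : Part ℕ :=
  (phi k (encode (Dlist k j))).bind fun c => phi c (probe k j)

def stepOK (k j : ℕ) : Prop := stepVal k j = Part.some 0

open scoped Classical in
/-- the first failing step -/
noncomputable def bj (k : ℕ) (hall : ¬ ∀ j, stepOK k j) : ℕ :=
  Nat.find (not_forall.1 hall)

open scoped Classical in
lemma bj_not {k : ℕ} (hall : ¬ ∀ j, stepOK k j) : ¬ stepOK k (bj k hall) :=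
  Nat.find_spec (not_forall.1 hall)

open scoped Classical in
lemma bj_min {k : ℕ} (hall : ¬ ∀ j, stepOK k j) {i : ℕ} (hi : i < bj k hall) :
    stepOK k i :=
  not_not.1 (Nat.find_min (not_forall.1 hall) hi)

open scoped Classical in
/-- The diagonal languages. -/
noncomputable def Lk (k : ℕ) : Set ℕ :=
  if hall : ∀ j, stepOK k j then col k
  else if (stepVal k (bj k hall)).Dom then {x | x ∈ Dlist k (bj k hall)}
  else {x | x ∈ Dlist k (bj k hall)} ∪ {mrk k (bj k hall)}

/-- The separating class of languages. -/
noncomputable def sepClass : Set (Set ℕ) := Set.range Lk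

/-! ### The partial set-driven learner -/

def firstOdd (l : List ℕ) : Option ℕ :=
  l.foldr (fun a acc => if a.unpair.2 % 2 = 1 then some a else acc) none

def maxIdx (l : List ℕ) : ℕ := l.foldr (fun a acc => max (a.unpair.2 / 2) acc) 0

noncomputable def stepF (k y s : ℕ) : Part ℕ :=
  if s = 0 then
    (stepVal k y).map fun v => if v = 0 then 0 else finIdx (encode (Dlist k y)) + 1
  else Part.some s

noncomputable def loopF (k n : ℕ) : Part ℕ :=
  Nat.rec (Part.some 0) (fun y IH => IH.bind fun s => stepF k y s) n

lemma loopF_zero (k : ℕ) : loopF k 0 = Part.some 0 := rfl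

lemma loopF_succ (k n : ℕ) : loopF k (n + 1) = (loopF k n).bind fun s => stepF k n s := rfl

noncomputable def mList (x : ℕ) : List ℕ := Dlist x.unpair.1 (x.unpair.2 / 2) ++ [x]

noncomputable def loopPart (l : List ℕ) : Part ℕ :=
  (loopF l.headI.unpair.1 (maxIdx l + 1)).map fun s =>
    if s = 0 then colIdx l.headI.unpair.1 else s - 1

def oSel (l : List ℕ) : Option Unit :=
  Option.casesOn (firstOdd l) (some ()) (fun _ => none)

noncomputable def body (l : List ℕ) : Part ℕ :=
  Option.casesOn (oSel l)
    (Part.some (finIdx (encode (mList ((firstOdd l).getD 0)))))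
    (fun _ => loopPart l)

/-- The partial computable set-driven learner for `sepClass`. -/
noncomputable def hstar : Learner := fun n =>
  (Part.ofOption (decode (α := List ℕ) n)).bind body

/-! ### Computability of `hstar` -/

lemma phi_partrec : Partrec₂ phi :=
  eval_part.comp ((Computable.ofNat Code).comp Computable.fst) Computable.snd

lemma pt_primrec : Primrec₂ pt :=
  Primrec₂.natPair.comp Primrec.fst
    (Primrec.nat_mul.comp (Primrec.const 2) Primrec.snd) |>.to₂

lemma Dlist_primrec : Primrec₂ Dlist := by
  have h : Primrec fun p : ℕ × ℕ => (List.range (p.2 + 1)).map (pt p.1) := by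
    have hr : Primrec fun p : ℕ × ℕ => List.range (p.2 + 1) :=
      Primrec.list_range.comp (Primrec.succ.comp Primrec.snd)
    exact Primrec.list_map hr (pt_primrec.comp (Primrec.fst.comp Primrec.fst)
      Primrec.snd).to₂
  exact h.to₂

lemma probe_primrec : Primrec₂ probe :=
  (pt_primrec.comp Primrec.fst (Primrec.succ.comp Primrec.snd)).to₂

lemma stepVal_partrec : Partrec₂ stepVal := by
  have h1 : Partrec fun p : ℕ × ℕ => phi p.1 (encode (Dlist p.1 p.2)) :=
    phi_partrec.comp Computable.fst
      (Computable.encode.comp (Dlist_primrec.to_comp.comp Computable.fst Computable.snd))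
  have h2 : Partrec₂ fun (p : ℕ × ℕ) (c : ℕ) => phi c (probe p.1 p.2) :=
    (phi_partrec.comp Computable.snd
      ((probe_primrec.to_comp.comp Computable.fst Computable.snd).comp Computable.fst)).to₂
  exact (h1.bind h2).to₂

lemma computable_ite {α σ : Type} [Primcodable α] [Primcodable σ]
    {c : α → Prop} [DecidablePred c] {f g : α → σ}
    (hc : PrimrecPred c) (hf : Computable f) (hg : Computable g) :
    Computable fun a => if c a then f a else g a :=
  (Computable.cond hc.decide.to_comp hf hg).of_eq fun a => by
    by_cases h : c a <;> simp [h]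

lemma stepF_partrec : Partrec fun p : (ℕ × ℕ) × ℕ => stepF p.1.1 p.1.2 p.2 := by
  have hsel : Computable fun p : (ℕ × ℕ) × ℕ => (if p.2 = 0 then some () else none : Option Unit) :=
    computable_ite (Primrec.eq.comp Primrec.snd (Primrec.const 0))
      (Computable.const (some ())) (Computable.const none)
  have htot : Computable fun p : (ℕ × ℕ) × ℕ => p.2 := Computable.snd
  have hSV : Partrec fun p : (ℕ × ℕ) × ℕ => stepVal p.1.1 p.1.2 :=
    stepVal_partrec.comp (Computable.fst.comp Computable.fst)
      (Computable.snd.comp Computable.fst)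
  have hmap : Computable₂ fun (p : (ℕ × ℕ) × ℕ) (v : ℕ) =>
      if v = 0 then (0 : ℕ) else finIdx (encode (Dlist p.1.1 p.1.2)) + 1 := by
    have hD : Computable fun r : ((ℕ × ℕ) × ℕ) × ℕ => Dlist r.1.1.1 r.1.1.2 :=
      Dlist_primrec.to_comp.comp
        ((Primrec.fst.comp (Primrec.fst.comp Primrec.fst)).to_comp)
        ((Primrec.snd.comp (Primrec.fst.comp Primrec.fst)).to_comp)
    have hfi : Computable fun r : ((ℕ × ℕ) × ℕ) × ℕ =>
        finIdx (encode (Dlist r.1.1.1 r.1.1.2)) + 1 :=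
      (Primrec.succ.to_comp).comp (finIdx_computable.comp (Computable.encode.comp hD))
    exact (computable_ite (Primrec.eq.comp Primrec.snd (Primrec.const 0))
      (Computable.const 0) hfi).to₂
  have hA : Partrec fun p : (ℕ × ℕ) × ℕ =>
      (stepVal p.1.1 p.1.2).map fun v =>
        if v = 0 then (0 : ℕ) else finIdx (encode (Dlist p.1.1 p.1.2)) + 1 :=
    hSV.map hmap
  have hpart : Partrec₂ fun (p : (ℕ × ℕ) × ℕ) (_ : Unit) =>
      (stepVal p.1.1 p.1.2).map fun v =>
        if v = 0 then (0 : ℕ) else finIdx (encode (Dlist p.1.1 p.1.2)) + 1 :=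
    (hA.comp Computable.fst).to₂
  have := Partrec.optionCasesOn_right hsel htot hpart
  exact this.of_eq fun p => by
    by_cases h : p.2 = 0 <;> simp [stepF, h]

lemma loopF_partrec : Partrec₂ loopF := by
  have h := Partrec.nat_rec (f := fun p : ℕ × ℕ => p.2)
    (g := fun _ : ℕ × ℕ => Part.some 0)
    (h := fun (p : ℕ × ℕ) (q : ℕ × ℕ) => stepF p.1 q.1 q.2)
    Computable.snd (Partrec.const' (Part.some 0))
    ((stepF_partrec.comp (((Computable.fst.comp Computable.fst).pair
      (Computable.fst.comp Computable.snd)).pair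
      (Computable.snd.comp Computable.snd))).to₂)
  exact (h.of_eq fun p => rfl).to₂

lemma firstOdd_primrec : Primrec firstOdd := by
  have hstep : Primrec₂ fun (_ : List ℕ) (q : ℕ × Option ℕ) =>
      if q.1.unpair.2 % 2 = 1 then some q.1 else q.2 := by
    have hp : PrimrecPred fun r : List ℕ × ℕ × Option ℕ => r.2.1.unpair.2 % 2 = 1 :=
      Primrec.eq.comp (Primrec.nat_mod.comp
        (Primrec.snd.comp (Primrec.unpair.comp (Primrec.fst.comp Primrec.snd)))
        (Primrec.const 2)) (Primrec.const 1)
    exact (Primrec.ite hp (Primrec.option_some.comp (Primrec.fst.comp Primrec.snd))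
      (Primrec.snd.comp Primrec.snd)).to₂
  exact (Primrec.list_foldr Primrec.id (Primrec.const none) hstep).of_eq fun l => rfl

lemma maxIdx_primrec : Primrec maxIdx := by
  have hstep : Primrec₂ fun (_ : List ℕ) (q : ℕ × ℕ) => max (q.1.unpair.2 / 2) q.2 := by
    have h1 : Primrec fun r : List ℕ × ℕ × ℕ => r.2.1.unpair.2 / 2 :=
      Primrec.nat_div.comp (Primrec.snd.comp (Primrec.unpair.comp
        (Primrec.fst.comp Primrec.snd))) (Primrec.const 2)
    exact (Primrec.nat_max.comp h1 (Primrec.snd.comp Primrec.snd)).to₂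
  exact (Primrec.list_foldr Primrec.id (Primrec.const 0) hstep).of_eq fun l => rfl

lemma mList_computable : Computable mList := by
  have h : Primrec fun x : ℕ => Dlist x.unpair.1 (x.unpair.2 / 2) ++ [x] := by
    have hD : Primrec fun x : ℕ => Dlist x.unpair.1 (x.unpair.2 / 2) :=
      Dlist_primrec.comp (Primrec.fst.comp Primrec.unpair)
        (Primrec.nat_div.comp (Primrec.snd.comp Primrec.unpair) (Primrec.const 2))
    exact Primrec.list_append.comp hD
      (Primrec.list_cons.comp Primrec.id (Primrec.const []))
  exact h.to_comp.of_eq fun x => rfl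

lemma loopPart_partrec : Partrec loopPart := by
  have hk : Computable fun l : List ℕ => l.headI.unpair.1 :=
    ((Primrec.fst.comp Primrec.unpair).comp Primrec.list_headI).to_comp
  have hLF : Partrec fun l : List ℕ => loopF l.headI.unpair.1 (maxIdx l + 1) :=
    loopF_partrec.comp hk ((Primrec.succ.comp maxIdx_primrec).to_comp)
  have hmap : Computable₂ fun (l : List ℕ) (s : ℕ) =>
      if s = 0 then colIdx l.headI.unpair.1 else s - 1 := by
    have hp : PrimrecPred fun r : List ℕ × ℕ => r.2 = 0 :=
      Primrec.eq.comp Primrec.snd (Primrec.const 0)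
    have hcol : Computable fun r : List ℕ × ℕ => colIdx r.1.headI.unpair.1 :=
      colIdx_computable.comp (hk.comp Computable.fst)
    have hpred : Computable fun r : List ℕ × ℕ => r.2 - 1 :=
      (Primrec.nat_sub.comp Primrec.snd (Primrec.const 1)).to_comp
    exact (computable_ite hp hcol hpred).to₂
  exact hLF.map hmap

lemma body_partrec : Partrec body := by
  have hsel : Computable oSel := by
    have := Computable.option_casesOn (firstOdd_primrec.to_comp)
      (Computable.const (some ())) (Computable.const none).to₂
    exact this.of_eq fun l => rfl
  have htot : Computable fun l : List ℕ => finIdx (encode (mList ((firstOdd l).getD 0))) :=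
    finIdx_computable.comp (Computable.encode.comp (mList_computable.comp
      ((Primrec.option_getD.comp firstOdd_primrec (Primrec.const 0)).to_comp)))
  have hpart : Partrec₂ fun (l : List ℕ) (_ : Unit) => loopPart l :=
    (loopPart_partrec.comp Computable.fst).to₂
  exact (Partrec.optionCasesOn_right hsel htot hpart).of_eq fun l => rfl

lemma hstar_partrec : PartComputable hstar := by
  have h : Partrec hstar := by
    have hdec : Partrec fun n : ℕ => Part.ofOption (decode (α := List ℕ) n) :=
      Computable.decode.ofOption
    exact hdec.bind ((body_partrec.comp Computable.snd).to₂)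
  exact Partrec.nat_iff.1 h


/-! ### Basic facts about the construction -/

lemma pt_unpair (k i : ℕ) : (pt k i).unpair = (k, 2 * i) := Nat.unpair_pair _ _

lemma mrk_unpair (k j : ℕ) : (mrk k j).unpair = (k, 2 * j + 1) := Nat.unpair_pair _ _

lemma pt_fst (k i : ℕ) : (pt k i).unpair.1 = k := by rw [pt_unpair]

lemma pt_snd (k i : ℕ) : (pt k i).unpair.2 = 2 * i := by rw [pt_unpair]

lemma mrk_fst (k j : ℕ) : (mrk k j).unpair.1 = k := by rw [mrk_unpair]

lemma mrk_snd (k j : ℕ) : (mrk k j).unpair.2 = 2 * j + 1 := by rw [mrk_unpair]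

lemma mem_Dlist {k j x : ℕ} : x ∈ Dlist k j ↔ ∃ i ≤ j, x = pt k i := by
  simp only [Dlist, List.mem_map, List.mem_range, Nat.lt_succ_iff]
  constructor
  · rintro ⟨i, hi, rfl⟩; exact ⟨i, hi, rfl⟩
  · rintro ⟨i, hi, rfl⟩; exact ⟨i, hi, rfl⟩

lemma pt_inj {k i i' : ℕ} (h : pt k i = pt k i') : i = i' := by
  have := (Nat.pair_eq_pair.1 h).2; omega

lemma Dlist_pairwise (k j : ℕ) : (Dlist k j).Pairwise (· < ·) := by
  unfold Dlist
  rw [List.pairwise_map]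
  exact List.pairwise_lt_range.imp fun h => Nat.pair_lt_pair_right _ (by omega)

lemma Dlist_nodup (k j : ℕ) : (Dlist k j).Nodup :=
  (Dlist_pairwise k j).imp fun h => Nat.ne_of_lt h

lemma Dlist_sorted (k j : ℕ) : (Dlist k j).Pairwise (· ≤ ·) :=
  (Dlist_pairwise k j).imp fun h => Nat.le_of_lt h

lemma sort_Dfin (k j : ℕ) : (Dfin k j).sort (· ≤ ·) = Dlist k j :=
  (List.toFinset_sort _ (Dlist_nodup k j)).2 (Dlist_sorted k j)

lemma mem_Dfin {k j x : ℕ} : x ∈ Dfin k j ↔ x ∈ Dlist k j := List.mem_toFinset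

lemma setCode_Dfin (k j : ℕ) : setCode (Dfin k j) = encode (Dlist k j) := by
  rw [setCode, sort_Dfin]

lemma Dlist_ne_nil (k j : ℕ) : Dlist k j ≠ [] := by
  intro h
  have : pt k 0 ∈ Dlist k j := mem_Dlist.2 ⟨0, Nat.zero_le _, rfl⟩
  rw [h] at this
  exact absurd this (List.not_mem_nil)

lemma headI_mem {l : List ℕ} (h : l ≠ []) : l.headI ∈ l := by
  cases l with
  | nil => exact absurd rfl h
  | cons a l => exact List.mem_cons_self

lemma col_eq (k : ℕ) : col k = {x | x.unpair.1 = k ∧ x.unpair.2 % 2 = 0} := by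
  ext x
  constructor
  · rintro ⟨i, rfl⟩
    refine ⟨pt_fst k i, ?_⟩
    rw [pt_snd]
    omega
  · rintro ⟨h1, h2⟩
    refine ⟨x.unpair.2 / 2, ?_⟩
    have h3 : 2 * (x.unpair.2 / 2) = x.unpair.2 := by omega
    rw [pt, h3, ← h1, Nat.pair_unpair]

/-! ### firstOdd / maxIdx facts -/

lemma firstOdd_eq_none {l : List ℕ} (h : ∀ x ∈ l, x.unpair.2 % 2 = 0) :
    firstOdd l = none := by
  induction l with
  | nil => rfl
  | cons a l ih =>
    show (if a.unpair.2 % 2 = 1 then some a else firstOdd l) = none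
    rw [if_neg (by have := h a (List.mem_cons_self); omega),
      ih fun x hx => h x (List.mem_cons_of_mem _ hx)]

lemma firstOdd_eq_some {l : List ℕ} {x : ℕ} (hx : x ∈ l) (hodd : x.unpair.2 % 2 = 1)
    (huniq : ∀ y ∈ l, y.unpair.2 % 2 = 1 → y = x) : firstOdd l = some x := by
  induction l with
  | nil => exact absurd hx (List.not_mem_nil)
  | cons a l ih =>
    show (if a.unpair.2 % 2 = 1 then some a else firstOdd l) = some x
    by_cases ha : a.unpair.2 % 2 = 1
    · rw [if_pos ha, huniq a (List.mem_cons_self) ha]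
    · rw [if_neg ha]
      rcases List.mem_cons.1 hx with rfl | hx'
      · exact absurd hodd ha
      · exact ih hx' fun y hy hyo => huniq y (List.mem_cons_of_mem _ hy) hyo

lemma le_maxIdx {l : List ℕ} {x : ℕ} (hx : x ∈ l) : x.unpair.2 / 2 ≤ maxIdx l := by
  induction l with
  | nil => exact absurd hx (List.not_mem_nil)
  | cons a l ih =>
    show _ ≤ max (a.unpair.2 / 2) (maxIdx l)
    rcases List.mem_cons.1 hx with rfl | hx'
    · exact le_max_left _ _
    · exact le_trans (ih hx') (le_max_right _ _)

lemma maxIdx_le {l : List ℕ} {B : ℕ} (h : ∀ x ∈ l, x.unpair.2 / 2 ≤ B) : maxIdx l ≤ B := by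
  induction l with
  | nil => exact Nat.zero_le _
  | cons a l ih =>
    show max (a.unpair.2 / 2) (maxIdx l) ≤ B
    exact max_le (h a (List.mem_cons_self)) (ih fun x hx => h x (List.mem_cons_of_mem _ hx))

/-! ### loopF semantics -/

lemma loopF_of_ok {k j : ℕ} (hmin : ∀ i < j, stepOK k i) :
    ∀ n ≤ j, loopF k n = Part.some 0 := by
  intro n
  induction n with
  | zero => intro _; rfl
  | succ m ih =>
    intro hle
    rw [loopF_succ, ih (by omega), Part.bind_some]
    show stepF k m 0 = Part.some 0
    rw [stepF, if_pos rfl, hmin m (by omega), Part.map_some, if_pos rfl]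

lemma loopF_all {k : ℕ} (hall : ∀ j, stepOK k j) (n : ℕ) : loopF k n = Part.some 0 := by
  induction n with
  | zero => rfl
  | succ m ih =>
    rw [loopF_succ, ih, Part.bind_some]
    show stepF k m 0 = Part.some 0
    rw [stepF, if_pos rfl, hall m, Part.map_some, if_pos rfl]

lemma loopF_stop {k j v : ℕ} (hmin : ∀ i < j, stepOK k i)
    (hv : stepVal k j = Part.some v) (hv0 : v ≠ 0) :
    loopF k (j + 1) = Part.some (finIdx (encode (Dlist k j)) + 1) := by
  rw [loopF_succ, loopF_of_ok hmin j le_rfl, Part.bind_some]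
  show stepF k j 0 = _
  rw [stepF, if_pos rfl, hv, Part.map_some, if_neg hv0]

lemma loopF_cases {k n s : ℕ} (h : loopF k n = Part.some s) :
    s = 0 ∨ ∃ i, s = finIdx (encode (Dlist k i)) + 1 := by
  induction n generalizing s with
  | zero =>
    left
    exact (Part.some_inj.1 h).symm
  | succ m ih =>
    rw [loopF_succ] at h
    obtain ⟨a, ha, hs⟩ := Part.mem_bind_iff.1 (Part.eq_some_iff.1 h)
    by_cases ha0 : a = 0
    · subst ha0
      rw [stepF, if_pos rfl] at hs
      obtain ⟨v, _, hfv⟩ := Part.mem_map_iff _ |>.1 hs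
      by_cases hv : v = 0
      · left; rw [← hfv, if_pos hv]
      · right; exact ⟨m, by rw [← hfv, if_neg hv]⟩
    · rw [stepF, if_neg ha0] at hs
      have : s = a := Part.mem_some_iff.1 hs
      subst this
      exact ih (Part.eq_some_iff.2 ha)

/-! ### body / hstar values -/

lemma hstar_setCode (D : Finset ℕ) : hstar (setCode D) = body (D.sort (· ≤ ·)) := by
  show (Part.ofOption (decode (α := List ℕ) (encode (D.sort (· ≤ ·))))).bind body = _
  rw [encodek]
  show (Part.some _).bind body = _
  rw [Part.bind_some]

lemma body_marker {l : List ℕ} {x : ℕ} (h : firstOdd l = some x) :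
    body l = Part.some (finIdx (encode (mList x))) := by
  unfold body oSel
  rw [h]
  rfl

lemma body_loop {l : List ℕ} (h : firstOdd l = none) : body l = loopPart l := by
  unfold body oSel
  rw [h]

lemma mList_mrk (k j : ℕ) : mList (mrk k j) = Dlist k j ++ [mrk k j] := by
  unfold mList
  rw [mrk_fst, mrk_snd]
  have hd : (2 * j + 1) / 2 = j := by omega
  rw [hd]

lemma hstar_col_val {k : ℕ} (hall : ∀ j, stepOK k j) {D : Finset ℕ} (hne : D.Nonempty)
    (hsub : ∀ x ∈ D, ∃ i, x = pt k i) : hstar (setCode D) = Part.some (colIdx k) := by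
  rw [hstar_setCode]
  have hmem : ∀ x, x ∈ D.sort (· ≤ ·) ↔ x ∈ D := fun x => Finset.mem_sort _
  have hnil : D.sort (· ≤ ·) ≠ [] := by
    obtain ⟨x, hx⟩ := hne
    intro hl
    have := (hmem x).2 hx
    rw [hl] at this
    exact absurd this (List.not_mem_nil)
  have hno : firstOdd (D.sort (· ≤ ·)) = none := by
    apply firstOdd_eq_none
    intro x hx
    obtain ⟨i, rfl⟩ := hsub x ((hmem x).1 hx)
    rw [pt_snd]
    omega
  rw [body_loop hno]
  unfold loopPart
  have hk : (D.sort (· ≤ ·)).headI.unpair.1 = k := by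
    obtain ⟨i, hh⟩ := hsub _ ((hmem _).1 (headI_mem hnil))
    rw [hh, pt_fst]
  rw [hk, loopF_all hall, Part.map_some, if_pos rfl]

lemma hstar_fin_val {k j v : ℕ} (hmin : ∀ i < j, stepOK k i)
    (hv : stepVal k j = Part.some v) (hv0 : v ≠ 0) :
    hstar (setCode (Dfin k j)) = Part.some (finIdx (encode (Dlist k j))) := by
  rw [hstar_setCode, sort_Dfin]
  have hno : firstOdd (Dlist k j) = none := by
    apply firstOdd_eq_none
    intro x hx
    obtain ⟨i, _, rfl⟩ := mem_Dlist.1 hx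
    rw [pt_snd]
    omega
  rw [body_loop hno]
  unfold loopPart
  have hhd : (Dlist k j).headI.unpair.1 = k := by
    obtain ⟨i, _, hh⟩ := mem_Dlist.1 (headI_mem (Dlist_ne_nil k j))
    rw [hh, pt_fst]
  have hmax : maxIdx (Dlist k j) = j := by
    apply le_antisymm
    · apply maxIdx_le
      intro x hx
      obtain ⟨i, hi, rfl⟩ := mem_Dlist.1 hx
      rw [pt_snd]
      omega
    · have := le_maxIdx (l := Dlist k j) (x := pt k j) (mem_Dlist.2 ⟨j, le_rfl, rfl⟩)
      rw [pt_snd] at this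
      omega
  rw [hhd, hmax, loopF_stop hmin hv hv0, Part.map_some,
    if_neg (Nat.succ_ne_zero _), Nat.succ_sub_one]

lemma hstar_mrk_val {D : Finset ℕ} {k j : ℕ} (hmem : mrk k j ∈ D)
    (hev : ∀ y ∈ D, y ≠ mrk k j → y.unpair.2 % 2 = 0) :
    hstar (setCode D) = Part.some (finIdx (encode (mList (mrk k j)))) := by
  rw [hstar_setCode]
  have hfo : firstOdd (D.sort (· ≤ ·)) = some (mrk k j) := by
    apply firstOdd_eq_some ((Finset.mem_sort _).2 hmem)
    · rw [mrk_snd]; omega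
    · intro y hy hyo
      by_contra hne
      have := hev y ((Finset.mem_sort _).1 hy) hne
      omega
  rw [body_marker hfo]

lemma hstar_CIndex {n e : ℕ} (h : hstar n = Part.some e) : CIndex e := by
  unfold hstar at h
  cases hd : decode (α := List ℕ) n with
  | none =>
    rw [hd] at h
    exact absurd h (by simp [Part.ofOption])
  | some l =>
    rw [hd] at h
    replace h : body l = Part.some e := by
      rw [show Part.ofOption (some l) = Part.some l from rfl, Part.bind_some] at h
      exact h
    cases hfo : firstOdd l with
    | some x =>
      rw [body_marker hfo] at h
      rw [← Part.some_inj.1 h]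
      exact CIndex_finIdx _
    | none =>
      rw [body_loop hfo] at h
      unfold loopPart at h
      obtain ⟨s, hs, hse⟩ := Part.mem_map_iff _ |>.1 (Part.eq_some_iff.1 h)
      rcases loopF_cases (Part.eq_some_iff.2 hs) with h0 | ⟨i, hi⟩
      · rw [← hse, if_pos h0]
        exact CIndex_colIdx _
      · rw [← hse, if_neg (by omega), hi, Nat.succ_sub_one]
        exact CIndex_finIdx _

/-! ### fincontent facts -/

lemma mem_fincontent {T : Text} {n x : ℕ} :
    x ∈ fincontent T n ↔ ∃ i < n, T i = some x := by
  simp only [fincontent, initSeg, List.mem_toFinset, List.mem_filterMap, List.mem_map,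
    List.mem_range, id_eq]
  constructor
  · rintro ⟨o, ⟨i, hi, rfl⟩, ho⟩; exact ⟨i, hi, ho⟩
  · rintro ⟨i, hi, hT⟩; exact ⟨T i, ⟨i, hi, rfl⟩, hT⟩

lemma fincontent_subset_content {T : Text} {n : ℕ} :
    ∀ x ∈ fincontent T n, x ∈ content T := by
  intro x hx
  obtain ⟨i, _, hi⟩ := mem_fincontent.1 hx
  exact ⟨i, hi⟩

lemma eventually_fincontent {T : Text} {D : Finset ℕ} (h : content T = ↑D) :
    ∃ n₀, ∀ n ≥ n₀, fincontent T n = D := by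
  have hx : ∀ x, x ∈ D → ∃ i, T i = some x := by
    intro x hxD
    have : x ∈ content T := by rw [h]; exact hxD
    exact this
  choose f hf using hx
  refine ⟨D.attach.sup (fun x => f x.1 x.2 + 1), fun n hn => ?_⟩
  apply Finset.ext
  intro x
  rw [mem_fincontent]
  constructor
  · rintro ⟨i, _, hi⟩
    have : x ∈ content T := ⟨i, hi⟩
    rw [h] at this
    exact this
  · intro hxD
    refine ⟨f x hxD, ?_, hf x hxD⟩
    have : f x hxD + 1 ≤ D.attach.sup (fun x => f x.1 x.2 + 1) :=
      Finset.le_sup (f := fun (y : {y // y ∈ D}) => f y.1 y.2 + 1)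
        (Finset.mem_attach D ⟨x, hxD⟩)
    omega

/-! ### hstar learns the class -/

theorem hstar_learns (k : ℕ) : Learns Sdop (andRes CIndRes ExC) hstar (Lk k) := by
  intro T hT
  refine ⟨fun i e he => hstar_CIndex he, ?_⟩
  by_cases hall : ∀ j, stepOK k j
  · -- the full column case
    have hLk : Lk k = col k := by rw [Lk, dif_pos hall]
    rw [hLk] at hT
    have h0 : pt k 0 ∈ content T := by rw [hT]; exact ⟨0, rfl⟩
    obtain ⟨n1, hn1⟩ := h0
    have hval : ∀ n ≥ n1 + 1, Sdop hstar T n = Part.some (colIdx k) := by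
      intro n hn
      apply hstar_col_val hall
      · exact ⟨pt k 0, mem_fincontent.2 ⟨n1, by omega, hn1⟩⟩
      · intro x hx
        have : x ∈ content T := fincontent_subset_content x hx
        rw [hT] at this
        exact this
    refine ⟨n1 + 1, fun n hn => by rw [hval n hn, hval _ le_rfl], colIdx k, hval _ le_rfl,
      CIndex_colIdx k, ?_⟩
    rw [Cset_colIdx, hT, col_eq]
  · set j := bj k hall with hj
    have hmin : ∀ i < j, stepOK k i := fun i hi => bj_min hall hi
    by_cases hdom : (stepVal k j).Dom
    · -- finite language, explicit stop
      have hLk : Lk k = {x | x ∈ Dlist k j} := by rw [Lk, dif_neg hall, if_pos hdom]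
      have hTD : content T = ↑(Dfin k j) := by
        rw [hT, hLk]
        ext x
        simp [Dfin, List.mem_toFinset]
      obtain ⟨n₀, hn₀⟩ := eventually_fincontent hTD
      have hv : stepVal k j = Part.some ((stepVal k j).get hdom) := (Part.some_get hdom).symm
      have hv0 : (stepVal k j).get hdom ≠ 0 := by
        intro h0
        exact bj_not hall (by rw [stepOK, hv, h0])
      have hval : ∀ n ≥ n₀, Sdop hstar T n = Part.some (finIdx (encode (Dlist k j))) := by
        intro n hn
        show hstar (setCode (fincontent T n)) = _
        rw [hn₀ n hn]
        exact hstar_fin_val hmin hv hv0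
      refine ⟨n₀, fun n hn => by rw [hval n hn, hval _ le_rfl], _, hval _ le_rfl,
        CIndex_finIdx _, ?_⟩
      rw [Cset_finIdx, hT, hLk]
    · -- finite language with marker
      have hLk : Lk k = {x | x ∈ Dlist k j} ∪ {mrk k j} := by
        rw [Lk, dif_neg hall, if_neg hdom]
      have hTD : content T = ↑(insert (mrk k j) (Dfin k j)) := by
        rw [hT, hLk]
        ext x
        simp only [Finset.coe_insert, Set.mem_insert_iff, Set.mem_union, Set.mem_setOf_eq,
          Set.mem_singleton_iff, Finset.mem_coe, mem_Dfin]
        tauto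
      obtain ⟨n₀, hn₀⟩ := eventually_fincontent hTD
      have hval : ∀ n ≥ n₀, Sdop hstar T n = Part.some (finIdx (encode (mList (mrk k j)))) := by
        intro n hn
        show hstar (setCode (fincontent T n)) = _
        rw [hn₀ n hn]
        apply hstar_mrk_val (Finset.mem_insert_self _ _)
        intro y hy hne
        rcases Finset.mem_insert.1 hy with rfl | hy'
        · exact absurd rfl hne
        · obtain ⟨i, _, rfl⟩ := mem_Dlist.1 (mem_Dfin.1 hy')
          rw [pt_snd]
          omega
      refine ⟨n₀, fun n hn => by rw [hval n hn, hval _ le_rfl], _, hval _ le_rfl,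
        CIndex_finIdx _, ?_⟩
      rw [Cset_finIdx, hT, hLk]
      ext x
      simp only [mList_mrk, Set.mem_setOf_eq, List.mem_append, List.mem_singleton,
        Set.mem_union, Set.mem_singleton_iff]

/-! ### No total computable learner succeeds -/

theorem defeat :
    ¬ ∃ h : Learner, TotalComputable h ∧
      ∀ L ∈ sepClass, Learns Sdop (andRes CIndRes ExC) h L := by
  rintro ⟨h, ⟨hpart, htot⟩, hl⟩
  obtain ⟨c, hc⟩ := exists_code.1 hpart
  have hphik : phi (encode c) = h := by rw [phi_encode, hc]
  set k := encode c with hk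
  have hlearn := hl _ (⟨k, rfl⟩ : Lk k ∈ sepClass)
  by_cases hall : ∀ j, stepOK k j
  · -- column case: the limit index must reject some column element
    set T : Text := fun n => some (pt k n) with hTdef
    have hcT : content T = col k := by
      ext x
      exact ⟨fun ⟨n, hn⟩ => ⟨n, (Option.some_inj.1 hn).symm⟩, fun ⟨i, hi⟩ => ⟨i, by rw [hi]⟩⟩
    have hCL : content T = Lk k := by rw [hcT, Lk, dif_pos hall]
    obtain ⟨_, hEx⟩ := hlearn T hCL
    obtain ⟨n₀, hconst, e, hn₀, hCi, hCs⟩ := hEx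
    have hfc : fincontent T (n₀ + 1) = Dfin k n₀ := by
      ext x
      rw [mem_fincontent, mem_Dfin, mem_Dlist]
      constructor
      · rintro ⟨i, hi, hx⟩
        exact ⟨i, by omega, (Option.some_inj.1 hx).symm⟩
      · rintro ⟨i, hi, rfl⟩
        exact ⟨i, by omega, rfl⟩
    have he1 : h (setCode (fincontent T (n₀ + 1))) = Part.some e := by
      have := hconst (n₀ + 1) (by omega)
      rw [hn₀] at this
      exact this
    have hsv : stepVal k n₀ = phi e (probe k n₀) := by
      rw [stepVal, hphik, ← setCode_Dfin, ← hfc, he1, Part.bind_some]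
    have h0 : phi e (probe k n₀) = Part.some 0 := by rw [← hsv]; exact hall n₀
    have h1 : phi e (probe k n₀) = Part.some 1 := by
      have : probe k n₀ ∈ Cset e := by
        rw [hCs, hcT]
        exact ⟨n₀ + 1, rfl⟩
      exact this
    rw [h0] at h1
    exact absurd (Part.some_inj.1 h1) (by omega)
  · set j := bj k hall with hj
    have hmin : ∀ i < j, stepOK k i := fun i hi => bj_min hall hi
    by_cases hdom : (stepVal k j).Dom
    · -- explicit-stop case
      set T : Text := fun n => some (pt k (min n j)) with hTdef
      have hcT : content T = {x | x ∈ Dlist k j} := by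
        ext x
        constructor
        · rintro ⟨n, hn⟩
          exact mem_Dlist.2 ⟨min n j, Nat.min_le_right _ _, (Option.some_inj.1 hn).symm⟩
        · intro hx
          obtain ⟨i, hi, rfl⟩ := mem_Dlist.1 hx
          refine ⟨i, ?_⟩
          show some (pt k (min i j)) = some (pt k i)
          rw [Nat.min_eq_left hi]
      have hCL : content T = Lk k := by rw [hcT, Lk, dif_neg hall, if_pos hdom]
      obtain ⟨hCInd, hEx⟩ := hlearn T hCL
      obtain ⟨n₀, hconst, e, hn₀, _, hCs⟩ := hEx
      have hfc : ∀ n ≥ j + 1, fincontent T n = Dfin k j := by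
        intro n hn
        ext x
        rw [mem_fincontent, mem_Dfin, mem_Dlist]
        constructor
        · rintro ⟨i, hi, hx⟩
          exact ⟨min i j, Nat.min_le_right _ _, (Option.some_inj.1 hx).symm⟩
        · rintro ⟨i, hi, rfl⟩
          refine ⟨i, by omega, ?_⟩
          show some (pt k (min i j)) = some (pt k i)
          rw [Nat.min_eq_left hi]
      set N := max n₀ (j + 1) with hN
      have heN : Sdop h T N = Part.some e := by
        rw [hconst N (le_max_left _ _), hn₀]
      have heval : h (setCode (Dfin k j)) = Part.some e := by
        rw [← hfc N (le_max_right _ _)]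
        exact heN
      have hCi : CIndex e := hCInd N e heN
      have hsv : stepVal k j = phi e (probe k j) := by
        rw [stepVal, hphik, ← setCode_Dfin, heval, Part.bind_some]
      rcases hCi (probe k j) with h0 | h1
      · exact bj_not hall (by rw [stepOK, hsv, h0])
      · have : probe k j ∈ Cset e := h1
        rw [hCs, hcT] at this
        obtain ⟨i, hi, hpe⟩ := mem_Dlist.1 this
        have := pt_inj hpe
        omega
    · -- divergence case: CInd is violated
      set T : Text := fun n => if n ≤ j then some (pt k n) else some (mrk k j) with hTdef
      have hcT : content T = {x | x ∈ Dlist k j} ∪ {mrk k j} := by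
        ext x
        constructor
        · rintro ⟨n, hn⟩
          replace hn : (if n ≤ j then some (pt k n) else some (mrk k j)) = some x := hn
          by_cases hnj : n ≤ j
          · rw [if_pos hnj] at hn
            exact Or.inl (mem_Dlist.2 ⟨n, hnj, (Option.some_inj.1 hn).symm⟩)
          · rw [if_neg hnj] at hn
            exact Or.inr (Option.some_inj.1 hn).symm
        · rintro (hx | rfl)
          · obtain ⟨i, hi, rfl⟩ := mem_Dlist.1 hx
            refine ⟨i, ?_⟩
            show (if i ≤ j then some (pt k i) else some (mrk k j)) = some (pt k i)
            rw [if_pos hi]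
          · refine ⟨j + 1, ?_⟩
            show (if j + 1 ≤ j then some (pt k (j + 1)) else some (mrk k j)) = some (mrk k j)
            rw [if_neg (by omega)]
      have hCL : content T = Lk k := by rw [hcT, Lk, dif_neg hall, if_neg hdom]
      obtain ⟨hCInd, _⟩ := hlearn T hCL
      have hfc : fincontent T (j + 1) = Dfin k j := by
        ext x
        rw [mem_fincontent, mem_Dfin, mem_Dlist]
        constructor
        · rintro ⟨i, hi, hx⟩
          replace hx : (if i ≤ j then some (pt k i) else some (mrk k j)) = some x := hx
          rw [if_pos (by omega : i ≤ j)] at hx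
          exact ⟨i, by omega, (Option.some_inj.1 hx).symm⟩
        · rintro ⟨i, hi, rfl⟩
          refine ⟨i, by omega, ?_⟩
          show (if i ≤ j then some (pt k i) else some (mrk k j)) = some (pt k i)
          rw [if_pos hi]
      have hDom := htot (setCode (fincontent T (j + 1)))
      obtain ⟨e, he⟩ : ∃ e, h (setCode (fincontent T (j + 1))) = Part.some e :=
        ⟨_, (Part.some_get hDom).symm⟩
      have hCi := hCInd (j + 1) _ he
      have hsv : stepVal k j = phi e (probe k j) := by
        rw [stepVal, hphik, ← setCode_Dfin, ← hfc, he, Part.bind_some]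
      apply hdom
      rw [hsv]
      rcases hCi (probe k j) with h0 | h1
      · rw [h0]; trivial
      · rw [h1]; trivial

/-! ### The class consists of recursive languages -/

theorem reclang_list (l : List ℕ) : RecLang {x | x ∈ l} := by
  refine ⟨fun x => memB l x, memB_primrec.to_comp.comp (Computable.const l) Computable.id, ?_⟩
  intro x
  show x ∈ l ↔ memB l x = true
  rw [memB_eq, decide_eq_true_eq]

theorem sep_recclass : IsRecClass sepClass := by
  rintro L ⟨k, rfl⟩
  by_cases hall : ∀ j, stepOK k j
  · rw [Lk, dif_pos hall]
    refine ⟨fun x => decide (x.unpair.1 = k ∧ x.unpair.2 % 2 = 0), ?_, ?_⟩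
    · have h1 : PrimrecPred fun x : ℕ => x.unpair.1 = k :=
        Primrec.eq.comp (Primrec.fst.comp Primrec.unpair) (Primrec.const k)
      have h2 : PrimrecPred fun x : ℕ => x.unpair.2 % 2 = 0 :=
        Primrec.eq.comp (Primrec.nat_mod.comp (Primrec.snd.comp Primrec.unpair)
          (Primrec.const 2)) (Primrec.const 0)
      exact (h1.and h2).decide.to_comp
    · intro x
      rw [col_eq]
      simp
  · rw [Lk, dif_neg hall]
    by_cases hdom : (stepVal k (bj k hall)).Dom
    · rw [if_pos hdom]
      exact reclang_list _
    · rw [if_neg hdom]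
      have : {x | x ∈ Dlist k (bj k hall)} ∪ {mrk k (bj k hall)} =
          {x | x ∈ Dlist k (bj k hall) ++ [mrk k (bj k hall)]} := by
        ext x
        simp only [Set.mem_union, Set.mem_setOf_eq, Set.mem_singleton_iff, List.mem_append,
          List.mem_singleton]
      rw [this]
      exact reclang_list _

theorem sep_in_RHS : sepClass ∈ LearnableREC PartComputable Sdop (andRes CIndRes ExC) :=
  ⟨sep_recclass, hstar, hstar_partrec, fun L hL => by
    obtain ⟨k, rfl⟩ := hL
    exact hstar_learns k⟩


end Sep


/-- `[ℛTxtSdCIndEx_C]_REC ⊊ [TxtSdCIndEx_C]_REC`. -/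
theorem total_sd_cind_ssubset :
    LearnableREC TotalComputable Sdop (andRes CIndRes ExC) ⊂
      LearnableREC PartComputable Sdop (andRes CIndRes ExC) := by
  rw [Set.ssubset_def]
  constructor
  · rintro ℒ ⟨hrec, h, ⟨hp, _⟩, hl⟩
    exact ⟨hrec, h, hp, hl⟩
  · intro hba
    obtain ⟨_, h, htot, hl⟩ := hba Sep.sep_in_RHS
    exact Sep.defeat ⟨h, htot, hl⟩

end InductiveInference
end

section
/- [ℛTxtItCIndEx_C]_REC ⊊ [TxtItCIndEx_C]_REC; that is, every class of recursive languages CIndEx_C-learnable by a total computable iterative learner is CIndEx_C-learnable by a partial computable iterative learner, and there exists a class of recursive languages CIndEx_C-learnable by a partial computable iterative learner but by no total computable iterative learner. -/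
namespace InductiveInference

/-! ### Auxiliary development -/

open Nat.Partrec (Code)
open Nat.Partrec.Code

section Encoding

lemma encode_none_eq : (Encodable.encode (none : Option (ℕ × Option ℕ))) = 0 := rfl

lemma encode_pause_eq (q : ℕ) :
    (Encodable.encode (some (q, (none : Option ℕ)) : Option (ℕ × Option ℕ)))
      = Nat.pair q 0 + 1 := rfl

lemma encode_data_eq (q x : ℕ) :
    (Encodable.encode (some (q, some x) : Option (ℕ × Option ℕ)))
      = Nat.pair q (x + 1) + 1 := rfl

lemma phi_encode (c : Code) : phi (Encodable.encode c) = c.eval := by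
  simp [phi]

lemma phi_partrec : Partrec₂ phi :=
  eval_part.comp ((Computable.ofNat Code).comp Computable.fst) Computable.snd

end Encoding

section Wmaster

/-- The "interpreter" for our state codes. -/
def Fint : ℕ →. ℕ := fun p =>
  if p.unpair.1 = 0 then Part.some 0
  else if p.unpair.1 % 2 = 0 ∧ p.unpair.2 = (p.unpair.1 / 2 - 1).unpair.2 then Part.some 1
  else phi (if p.unpair.1 % 2 = 1 then p.unpair.1 / 2 else (p.unpair.1 / 2 - 1).unpair.1)
    p.unpair.2

lemma Fint_partrec : Partrec Fint := by
  classical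
  have hu1 : Primrec fun p : ℕ => p.unpair.1 := Primrec.fst.comp Primrec.unpair
  have hu2 : Primrec fun p : ℕ => p.unpair.2 := Primrec.snd.comp Primrec.unpair
  -- the selector
  have hcondP : PrimrecPred fun p : ℕ =>
      p.unpair.1 = 0 ∨ (p.unpair.1 % 2 = 0 ∧ p.unpair.2 = (p.unpair.1 / 2 - 1).unpair.2) := by
    apply PrimrecPred.or
    · exact Primrec.eq.comp hu1 (Primrec.const 0)
    · apply PrimrecPred.and
      · exact Primrec.eq.comp (Primrec.nat_mod.comp hu1 (Primrec.const 2)) (Primrec.const 0)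
      · exact Primrec.eq.comp hu2
          (Primrec.snd.comp (Primrec.unpair.comp
            (Primrec.nat_sub.comp (Primrec.nat_div.comp hu1 (Primrec.const 2))
              (Primrec.const 1))))
  have hsel : Computable fun p : ℕ =>
      if p.unpair.1 = 0 ∨ (p.unpair.1 % 2 = 0 ∧ p.unpair.2 = (p.unpair.1 / 2 - 1).unpair.2)
      then (0:ℕ) else 1 :=
    (Primrec.ite hcondP (Primrec.const 0) (Primrec.const 1)).to_comp
  have hg : Computable fun p : ℕ => if p.unpair.1 = 0 then (0:ℕ) else 1 :=
    (Primrec.ite (Primrec.eq.comp hu1 (Primrec.const 0))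
      (Primrec.const 0) (Primrec.const 1)).to_comp
  have hidx : Computable fun p : ℕ =>
      if p.unpair.1 % 2 = 1 then p.unpair.1 / 2 else (p.unpair.1 / 2 - 1).unpair.1 :=
    (Primrec.ite (Primrec.eq.comp (Primrec.nat_mod.comp hu1 (Primrec.const 2))
        (Primrec.const 1))
      (Primrec.nat_div.comp hu1 (Primrec.const 2))
      (Primrec.fst.comp (Primrec.unpair.comp
        (Primrec.nat_sub.comp (Primrec.nat_div.comp hu1 (Primrec.const 2))
          (Primrec.const 1))))).to_comp
  have hh : Partrec₂ fun (p : ℕ) (_ : ℕ) =>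
      phi (if p.unpair.1 % 2 = 1 then p.unpair.1 / 2 else (p.unpair.1 / 2 - 1).unpair.1)
        p.unpair.2 :=
    phi_partrec.comp (hidx.comp Computable.fst) ((hu2.to_comp).comp Computable.fst)
  have hmain := Partrec.nat_casesOn_right hsel hg hh
  refine hmain.of_eq fun p => ?_
  by_cases h0 : p.unpair.1 = 0
  · have : (p.unpair.1 = 0 ∨ (p.unpair.1 % 2 = 0 ∧ p.unpair.2 = (p.unpair.1 / 2 - 1).unpair.2)) :=
      Or.inl h0
    simp only [if_pos this, Fint]
    conv_rhs => rw [if_pos h0]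
    simp [h0]
  · by_cases h1 : p.unpair.1 % 2 = 0 ∧ p.unpair.2 = (p.unpair.1 / 2 - 1).unpair.2
    · have : (p.unpair.1 = 0 ∨ _) := Or.inr h1
      simp only [if_pos this, Fint]
      conv_rhs => rw [if_neg h0, if_pos h1]
      simp [h0]
    · have : ¬ (p.unpair.1 = 0 ∨ (p.unpair.1 % 2 = 0 ∧
          p.unpair.2 = (p.unpair.1 / 2 - 1).unpair.2)) := by
        rintro (hh' | hh')
        · exact h0 hh'
        · exact h1 hh'
      simp only [if_neg this, Fint]
      conv_rhs => rw [if_neg h0, if_neg h1]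
      rfl

/-- A code for the interpreter. -/
noncomputable def Wc : Code :=
  (exists_code.mp (Partrec.nat_iff.mp Fint_partrec)).choose

lemma Wc_eval : Wc.eval = Fint :=
  (exists_code.mp (Partrec.nat_iff.mp Fint_partrec)).choose_spec

/-- State codes of the positive learner. -/
noncomputable def sC (t : ℕ) : ℕ := Encodable.encode (Wc.curry t)

lemma sC_inj : Function.Injective sC := fun a b hab =>
  (curry_inj (Encodable.encode_injective hab)).2

lemma phi_sC (t x : ℕ) : phi (sC t) x = Fint (Nat.pair t x) := by
  rw [sC, phi_encode, eval_curry, Wc_eval]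

lemma phi_sC_zero (x : ℕ) : phi (sC 0) x = Part.some 0 := by
  rw [phi_sC]; simp [Fint]

lemma phi_sC_odd (c x : ℕ) : phi (sC (2 * c + 1)) x = phi c x := by
  rw [phi_sC]
  have h0 : 2 * c + 1 ≠ 0 := by omega
  have h1 : (2 * c + 1) % 2 = 1 := by omega
  have h2 : (2 * c + 1) / 2 = c := by omega
  simp [Fint, Nat.unpair_pair, h0, h1, h2]

lemma phi_sC_even (c z x : ℕ) :
    phi (sC (2 * Nat.pair c z + 2)) x = if x = z then Part.some 1 else phi c x := by
  rw [phi_sC]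
  have h0 : 2 * Nat.pair c z + 2 ≠ 0 := by omega
  have h1 : (2 * Nat.pair c z + 2) % 2 = 0 := by omega
  have h2 : (2 * Nat.pair c z + 2) / 2 - 1 = Nat.pair c z := by omega
  simp only [Fint, Nat.unpair_pair, h0, if_false, h1, h2, true_and]
  by_cases hxz : x = z <;> simp [hxz, h1]

lemma CIndex_sC_zero : CIndex (sC 0) := fun x => Or.inl (phi_sC_zero x)

lemma Cset_sC_zero : Cset (sC 0) = ∅ := by
  ext x; simp [Cset, phi_sC_zero]

lemma CIndex_sC_odd {c : ℕ} (hc : CIndex c) : CIndex (sC (2 * c + 1)) := fun x => by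
  rw [phi_sC_odd]; exact hc x

lemma Cset_sC_odd (c : ℕ) : Cset (sC (2 * c + 1)) = Cset c := by
  ext x; simp [Cset, phi_sC_odd]

lemma CIndex_sC_even {c z : ℕ} (hc : CIndex c) : CIndex (sC (2 * Nat.pair c z + 2)) := fun x => by
  rw [phi_sC_even]
  split
  · exact Or.inr rfl
  · exact hc x

lemma Cset_sC_even (c z : ℕ) : Cset (sC (2 * Nat.pair c z + 2)) = Cset c ∪ {z} := by
  ext x
  simp only [Cset, Set.mem_setOf_eq, Set.mem_union, Set.mem_singleton_iff, phi_sC_even]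
  by_cases hxz : x = z <;> simp [hxz]

end Wmaster

section Hstar

/-- Decode a state code (by unbounded search). -/
noncomputable def decodeSt : ℕ →. ℕ := fun q =>
  Nat.rfind fun t => Part.some (decide (sC t = q))

lemma decodeSt_sC (t : ℕ) : decodeSt (sC t) = Part.some t := by
  refine Part.eq_some_iff.2 ?_
  rw [decodeSt]
  apply Nat.mem_rfind.2
  constructor
  · simp
  · intro m hm
    simp only [Part.mem_some_iff]
    have : sC m ≠ sC t := fun hh => absurd (sC_inj hh) (by omega)
    simp [this]

/-- The body of the positive learner on a datum. -/
noncomputable def hbody (q x : ℕ) : Part ℕ :=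
  (decodeSt q).bind fun t =>
    if t ≠ 0 ∧ t % 2 = 0 then Part.some q
    else (phi x.unpair.1 x).map fun v =>
      if v = 1 then sC (2 * x.unpair.1 + 1) else sC (2 * Nat.pair x.unpair.1 x + 2)

/-- The (partial computable) positive learner. -/
noncomputable def hstar : Learner := fun n =>
  Nat.casesOn n (Part.some (sC 0)) fun n' =>
    Nat.casesOn n'.unpair.2 (Part.some n'.unpair.1) fun x => hbody n'.unpair.1 x

lemma hstar_init : hstar (Encodable.encode (none : Option (ℕ × Option ℕ))) = Part.some (sC 0) :=
  rfl

lemma hstar_pause (q : ℕ) :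
    hstar (Encodable.encode (some (q, (none : Option ℕ)) : Option (ℕ × Option ℕ)))
      = Part.some q := by
  rw [encode_pause_eq]
  show (Nat.casesOn (Nat.pair q 0).unpair.2 _ _ : Part ℕ) = _
  simp [Nat.unpair_pair]

lemma hstar_data (q x : ℕ) :
    hstar (Encodable.encode (some (q, some x) : Option (ℕ × Option ℕ))) = hbody q x := by
  rw [encode_data_eq]
  show (Nat.casesOn (Nat.pair q (x+1)).unpair.2 _ _ : Part ℕ) = _
  simp [Nat.unpair_pair]

lemma hbody_sC (t x : ℕ) :
    hbody (sC t) x =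
      if t ≠ 0 ∧ t % 2 = 0 then Part.some (sC t)
      else (phi x.unpair.1 x).map fun v =>
        if v = 1 then sC (2 * x.unpair.1 + 1) else sC (2 * Nat.pair x.unpair.1 x + 2) := by
  rw [hbody, decodeSt_sC, Part.bind_some]

lemma sC_primrec : Primrec sC :=
  Primrec.encode.comp (primrec₂_curry.comp (Primrec.const Wc) Primrec.id)

/-- The data-processing core of `hstar`. -/
noncomputable def Gcore : ℕ →. ℕ := fun x =>
  (phi x.unpair.1 x).map fun v =>
    if v = 1 then sC (2 * x.unpair.1 + 1) else sC (2 * Nat.pair x.unpair.1 x + 2)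

lemma Gcore_partrec : Partrec Gcore := by
  have hu1 : Primrec fun x : ℕ => x.unpair.1 := Primrec.fst.comp Primrec.unpair
  have hbase : Partrec fun x : ℕ => phi x.unpair.1 x :=
    phi_partrec.comp hu1.to_comp Computable.id
  refine hbase.map ?_
  have hcond : PrimrecPred fun b : ℕ × ℕ => b.2 = 1 :=
    Primrec.eq.comp Primrec.snd (Primrec.const 1)
  have hxu : Primrec fun b : ℕ × ℕ => b.1.unpair.1 :=
    Primrec.fst.comp (Primrec.unpair.comp Primrec.fst)
  have hbr1 : Primrec fun b : ℕ × ℕ => sC (2 * b.1.unpair.1 + 1) :=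
    sC_primrec.comp (Primrec.succ.comp (Primrec.nat_mul.comp (Primrec.const 2) hxu))
  have hbr2 : Primrec fun b : ℕ × ℕ => sC (2 * Nat.pair b.1.unpair.1 b.1 + 2) :=
    sC_primrec.comp (Primrec.succ.comp (Primrec.succ.comp
      (Primrec.nat_mul.comp (Primrec.const 2) (Primrec₂.natPair.comp hxu Primrec.fst))))
  exact ((Primrec.ite hcond hbr1 hbr2).to_comp).to₂

lemma hbody_partrec : Partrec fun a : ℕ × ℕ => hbody a.1 a.2 := by
  have hc2 : Computable₂ fun (q t : ℕ) => decide (sC t = q) :=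
    ((PrimrecPred.decide (Primrec.eq.comp (sC_primrec.comp Primrec.snd) Primrec.fst)).to_comp).to₂
  have hdec : Partrec decodeSt := Partrec.rfind hc2.partrec₂
  -- the inner branch as a `casesOn`
  have hsel : Computable fun b : (ℕ × ℕ) × ℕ => if b.2 ≠ 0 ∧ b.2 % 2 = 0 then (0:ℕ) else 1 := by
    refine (Primrec.ite ?_ (Primrec.const 0) (Primrec.const 1)).to_comp
    apply PrimrecPred.and
    · exact PrimrecPred.not (Primrec.eq.comp Primrec.snd (Primrec.const 0))
    · exact Primrec.eq.comp (Primrec.nat_mod.comp Primrec.snd (Primrec.const 2))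
        (Primrec.const 0)
  have hg : Computable fun b : (ℕ × ℕ) × ℕ => b.1.1 :=
    (Primrec.fst.comp Primrec.fst).to_comp
  have hh : Partrec₂ fun (b : (ℕ × ℕ) × ℕ) (_ : ℕ) => Gcore b.1.2 :=
    Gcore_partrec.comp ((Primrec.snd.comp (Primrec.fst.comp Primrec.fst)).to_comp)
  have hinner : Partrec₂ fun (a : ℕ × ℕ) (t : ℕ) =>
      if t ≠ 0 ∧ t % 2 = 0 then Part.some a.1 else Gcore a.2 := by
    refine (Partrec.nat_casesOn_right hsel hg hh).of_eq fun b => ?_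
    by_cases hb : b.2 ≠ 0 ∧ b.2 % 2 = 0
    · simp only [if_pos hb]
      rfl
    · simp only [if_neg hb]
      rfl
  have hdf : Partrec fun a : ℕ × ℕ => decodeSt a.1 := hdec.comp Computable.fst
  have hb : Partrec fun a : ℕ × ℕ => (decodeSt a.1).bind fun t =>
      if t ≠ 0 ∧ t % 2 = 0 then Part.some a.1 else Gcore a.2 := hdf.bind hinner
  refine hb.of_eq fun a => ?_
  simp only [hbody, Gcore]

lemma hstar_partrec : PartComputable hstar := by
  have hu1 : Primrec fun n : ℕ => n.unpair.1 := Primrec.fst.comp Primrec.unpair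
  have hu2 : Primrec fun n : ℕ => n.unpair.2 := Primrec.snd.comp Primrec.unpair
  have hcmp : Computable fun b : ℕ × ℕ => (b.1.unpair.1, b.2) :=
    (hu1.comp Primrec.fst).to_comp.pair Primrec.snd.to_comp
  have hh2 : Partrec₂ fun (n' x : ℕ) => hbody n'.unpair.1 x :=
    (hbody_partrec.comp hcmp).of_eq fun b => rfl
  have step2 : Partrec fun n' : ℕ =>
      Nat.casesOn n'.unpair.2 (Part.some n'.unpair.1) (fun x => hbody n'.unpair.1 x) :=
    Partrec.nat_casesOn_right hu2.to_comp hu1.to_comp hh2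
  have htop : Partrec fun n : ℕ =>
      Nat.casesOn (id n) (Part.some (sC 0)) (fun n' =>
        Nat.casesOn n'.unpair.2 (Part.some n'.unpair.1) (fun x => hbody n'.unpair.1 x)) :=
    Partrec.nat_casesOn_right Computable.id (Computable.const (sC 0))
      (step2.comp Computable.snd)
  refine Partrec.nat_iff.1 (htop.of_eq fun n => ?_)
  cases n <;> rfl

end Hstar

section TheClass

open scoped Classical in
/-- The separating class. -/
noncomputable def LL : Set (Set ℕ) :=
  {L | ∃ c : ℕ, CIndex c ∧ (∀ x ∈ L, x.unpair.1 = c) ∧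
    (L = Cset c ∨ ∃ z : ℕ, phi c z = Part.some 0 ∧ L = Cset c ∪ {z})}

lemma phi_c_partrec (c : ℕ) : Partrec (phi c) :=
  phi_partrec.comp (Computable.const c) Computable.id

lemma cset_recLang {c : ℕ} (hc : CIndex c) : RecLang (Cset c) := by
  classical
  refine ⟨fun x => if phi c x = Part.some 1 then true else false, ?_, ?_⟩
  · have hmap : Partrec fun x : ℕ => (phi c x).map fun v => decide (v = 1) :=
      (phi_c_partrec c).map
        (((PrimrecPred.decide (Primrec.eq.comp Primrec.snd (Primrec.const 1))).to_comp).to₂)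
    refine Partrec.of_eq hmap fun x => ?_
    rcases hc x with h0 | h1
    · rw [h0]; simp [Part.some_inj, h0]
    · rw [h1]; simp [h1]
  · intro x
    simp only [Cset, Set.mem_setOf_eq]
    split <;> simp_all

lemma cset_union_recLang {c z : ℕ} (hc : CIndex c) : RecLang (Cset c ∪ {z}) := by
  classical
  refine ⟨fun x => if (x = z ∨ phi c x = Part.some 1) then true else false, ?_, ?_⟩
  · have hmap : Partrec fun x : ℕ => (phi c x).map fun v => decide (x = z) || decide (v = 1) :=
      (phi_c_partrec c).map
        ((Primrec.or.comp
          (PrimrecPred.decide (Primrec.eq.comp Primrec.fst (Primrec.const z)))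
          (PrimrecPred.decide (Primrec.eq.comp Primrec.snd (Primrec.const 1)))).to_comp.to₂)
    refine Partrec.of_eq hmap fun x => ?_
    rcases hc x with h0 | h1
    · rw [h0]; by_cases hxz : x = z <;> simp [hxz, Part.some_inj, h0]
    · rw [h1]; by_cases hxz : x = z <;> simp [hxz, h1]
  · intro x
    simp only [Cset, Set.mem_union, Set.mem_setOf_eq, Set.mem_singleton_iff]
    split <;> simp_all [or_comm]

lemma LL_rec : IsRecClass LL := by
  rintro L ⟨c, hc, _, hL | ⟨z, _, hL⟩⟩
  · exact hL ▸ cset_recLang hc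
  · exact hL ▸ cset_union_recLang hc

end TheClass

section Positive

open scoped Classical

lemma not_odd_even (c : ℕ) : ¬ (2 * c + 1 ≠ 0 ∧ (2 * c + 1) % 2 = 0) := by omega

lemma not_zero_cond : ¬ ((0:ℕ) ≠ 0 ∧ (0:ℕ) % 2 = 0) := by simp

lemma hstar_learns_B {c : ℕ} (hc : CIndex c) (htag : ∀ x ∈ Cset c, x.unpair.1 = c) :
    Learns Itop (andRes CIndRes ExC) hstar (Cset c) := by
  intro T hT
  have key : ∀ i, Itop hstar T i =
      Part.some (if ∃ j, j < i ∧ ∃ x, T j = some x then sC (2 * c + 1) else sC 0) := by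
    intro i
    induction i with
    | zero =>
      have : ¬ ∃ j, j < 0 ∧ ∃ x, T j = some x := by simp
      rw [if_neg this]
      exact hstar_init
    | succ i ih =>
      rw [Itop, ih, Part.bind_some]
      cases hTi : T i with
      | none =>
        have e1 : (∃ j, j < i + 1 ∧ ∃ x, T j = some x) = (∃ j, j < i ∧ ∃ x, T j = some x) := by
          refine propext ⟨?_, ?_⟩
          · rintro ⟨j, hj, x, hx⟩
            rcases Nat.lt_succ_iff_lt_or_eq.1 hj with hj' | rfl
            · exact ⟨j, hj', x, hx⟩
            · rw [hTi] at hx; cases hx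
          · rintro ⟨j, hj, hx⟩; exact ⟨j, Nat.lt_succ_of_lt hj, hx⟩
        simp only [e1]
        exact hstar_pause _
      | some x =>
        have hxL : x ∈ Cset c := by rw [← hB_aux T hT]; exact ⟨i, hTi⟩
        have hx1 : phi c x = Part.some 1 := hxL
        have htagx : x.unpair.1 = c := htag x hxL
        have hcond : ∃ j, j < i + 1 ∧ ∃ x, T j = some x := ⟨i, Nat.lt_succ_self i, x, hTi⟩
        rw [if_pos hcond]
        by_cases hd : ∃ j, j < i ∧ ∃ y, T j = some y
        · rw [if_pos hd, hstar_data, hbody_sC, if_neg (not_odd_even c), htagx, hx1,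
            Part.map_some]
          simp
        · rw [if_neg hd, hstar_data, hbody_sC, if_neg not_zero_cond, htagx, hx1,
            Part.map_some]
          simp
  refine ⟨?_, ?_⟩
  · intro i e he
    rw [key i] at he
    have he' := (Part.some_inj.1 he).symm
    by_cases hcond : ∃ j, j < i ∧ ∃ x, T j = some x
    · rw [if_pos hcond] at he'; rw [he']; exact CIndex_sC_odd hc
    · rw [if_neg hcond] at he'; rw [he']; exact CIndex_sC_zero
  · by_cases hLe : Cset c = ∅
    · refine ⟨0, ?_, sC 0, ?_, CIndex_sC_zero, by rw [Cset_sC_zero, hT, hLe]⟩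
      · intro n _
        have hnone : ∀ m, T m = none := by
          intro m
          cases hTm : T m with
          | none => rfl
          | some x =>
            exfalso
            have : x ∈ content T := ⟨m, hTm⟩
            rw [hT, hLe] at this
            exact this
        have hfalse : ∀ k, ¬ ∃ j, j < k ∧ ∃ x, T j = some x := by
          rintro k ⟨j, _, x, hx⟩
          rw [hnone j] at hx; cases hx
        rw [key n, key 0, if_neg (hfalse n), if_neg (hfalse 0)]
      · have : ¬ ∃ j, j < 0 ∧ ∃ x, T j = some x := by simp
        rw [key 0, if_neg this]
    · obtain ⟨x, hx⟩ := Set.nonempty_iff_ne_empty.2 hLe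
      have : x ∈ content T := by rw [hT]; exact hx
      obtain ⟨n, hn⟩ := this
      refine ⟨n + 1, ?_, sC (2 * c + 1), ?_, CIndex_sC_odd hc, by rw [Cset_sC_odd, hT]⟩
      · intro m hm
        have h1 : ∃ j, j < m ∧ ∃ x, T j = some x :=
          ⟨n, lt_of_lt_of_le (Nat.lt_succ_self n) hm, x, hn⟩
        have h2 : ∃ j, j < n + 1 ∧ ∃ x, T j = some x := ⟨n, Nat.lt_succ_self n, x, hn⟩
        rw [key m, key (n+1), if_pos h1, if_pos h2]
      · have h2 : ∃ j, j < n + 1 ∧ ∃ x, T j = some x := ⟨n, Nat.lt_succ_self n, x, hn⟩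
        rw [key (n+1), if_pos h2]
where
  hB_aux (T : Text) (hT : content T = Cset c) : content T = Cset c := hT

lemma hstar_learns_A {c z : ℕ} (hc : CIndex c) (hz0 : phi c z = Part.some 0)
    (htag : ∀ x ∈ Cset c ∪ {z}, x.unpair.1 = c) :
    Learns Itop (andRes CIndRes ExC) hstar (Cset c ∪ {z}) := by
  intro T hT
  have hzt : z.unpair.1 = c := htag z (Or.inr rfl)
  have key : ∀ i, Itop hstar T i = Part.some (
      if ∃ j, j < i ∧ T j = some z then sC (2 * Nat.pair c z + 2)
      else if ∃ j, j < i ∧ ∃ x, T j = some x then sC (2 * c + 1) else sC 0) := by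
    intro i
    induction i with
    | zero =>
      have h1 : ¬ ∃ j, j < 0 ∧ T j = some z := by simp
      have h2 : ¬ ∃ j, j < 0 ∧ ∃ x, T j = some x := by simp
      rw [if_neg h1, if_neg h2]
      exact hstar_init
    | succ i ih =>
      rw [Itop, ih, Part.bind_some]
      cases hTi : T i with
      | none =>
        have e1 : (∃ j, j < i + 1 ∧ T j = some z) = (∃ j, j < i ∧ T j = some z) := by
          refine propext ⟨?_, ?_⟩
          · rintro ⟨j, hj, hx⟩
            rcases Nat.lt_succ_iff_lt_or_eq.1 hj with hj' | rfl
            · exact ⟨j, hj', hx⟩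
            · rw [hTi] at hx; cases hx
          · rintro ⟨j, hj, hx⟩; exact ⟨j, Nat.lt_succ_of_lt hj, hx⟩
        have e2 : (∃ j, j < i + 1 ∧ ∃ x, T j = some x) = (∃ j, j < i ∧ ∃ x, T j = some x) := by
          refine propext ⟨?_, ?_⟩
          · rintro ⟨j, hj, x, hx⟩
            rcases Nat.lt_succ_iff_lt_or_eq.1 hj with hj' | rfl
            · exact ⟨j, hj', x, hx⟩
            · rw [hTi] at hx; cases hx
          · rintro ⟨j, hj, hx⟩; exact ⟨j, Nat.lt_succ_of_lt hj, hx⟩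
        simp only [e1, e2]
        exact hstar_pause _
      | some x =>
        have hxL : x ∈ Cset c ∪ {z} := by rw [← hT]; exact ⟨i, hTi⟩
        have htagx : x.unpair.1 = c := htag x hxL
        by_cases hz : ∃ j, j < i ∧ T j = some z
        · have hz' : ∃ j, j < i + 1 ∧ T j = some z :=
            ⟨hz.choose, Nat.lt_succ_of_lt hz.choose_spec.1, hz.choose_spec.2⟩
          rw [if_pos hz, if_pos hz', hstar_data, hbody_sC]
          have hcnd : (2 * Nat.pair c z + 2 ≠ 0 ∧ (2 * Nat.pair c z + 2) % 2 = 0) := by omega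
          rw [if_pos hcnd]
        · rw [if_neg hz]
          by_cases hxz : x = z
          · have hz' : ∃ j, j < i + 1 ∧ T j = some z :=
              ⟨i, Nat.lt_succ_self i, by rw [hTi, hxz]⟩
            rw [if_pos hz']
            subst hxz
            by_cases hd : ∃ j, j < i ∧ ∃ y, T j = some y
            · rw [if_pos hd, hstar_data, hbody_sC, if_neg (not_odd_even c), htagx, hz0,
                Part.map_some]
              norm_num
            · rw [if_neg hd, hstar_data, hbody_sC, if_neg not_zero_cond, htagx, hz0,
                Part.map_some]
              norm_num
          · have hxC : x ∈ Cset c := by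
              rcases hxL with h | h
              · exact h
              · exact absurd h hxz
            have hx1 : phi c x = Part.some 1 := hxC
            have hz' : ¬ ∃ j, j < i + 1 ∧ T j = some z := by
              rintro ⟨j, hj, hx⟩
              rcases Nat.lt_succ_iff_lt_or_eq.1 hj with hj' | rfl
              · exact hz ⟨j, hj', hx⟩
              · rw [hTi] at hx
                exact hxz (Option.some_inj.1 hx)
            have hcond : ∃ j, j < i + 1 ∧ ∃ x, T j = some x := ⟨i, Nat.lt_succ_self i, x, hTi⟩
            rw [if_neg hz', if_pos hcond]
            by_cases hd : ∃ j, j < i ∧ ∃ y, T j = some y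
            · rw [if_pos hd, hstar_data, hbody_sC, if_neg (not_odd_even c), htagx, hx1,
                Part.map_some]
              simp
            · rw [if_neg hd, hstar_data, hbody_sC, if_neg not_zero_cond, htagx, hx1,
                Part.map_some]
              simp
  refine ⟨?_, ?_⟩
  · intro i e he
    rw [key i] at he
    have he' := (Part.some_inj.1 he).symm
    by_cases h1 : ∃ j, j < i ∧ T j = some z
    · rw [if_pos h1] at he'; rw [he']; exact CIndex_sC_even hc
    · rw [if_neg h1] at he'
      by_cases h2 : ∃ j, j < i ∧ ∃ x, T j = some x
      · rw [if_pos h2] at he'; rw [he']; exact CIndex_sC_odd hc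
      · rw [if_neg h2] at he'; rw [he']; exact CIndex_sC_zero
  · have : z ∈ content T := by rw [hT]; exact Or.inr rfl
    obtain ⟨n, hn⟩ := this
    have hcz : ∀ m, n + 1 ≤ m → ∃ j, j < m ∧ T j = some z :=
      fun m hm => ⟨n, lt_of_lt_of_le (Nat.lt_succ_self n) hm, hn⟩
    refine ⟨n + 1, ?_, sC (2 * Nat.pair c z + 2), ?_, CIndex_sC_even hc,
      by rw [Cset_sC_even, hT]⟩
    · intro m hm
      rw [key m, key (n+1), if_pos (hcz m hm), if_pos (hcz (n+1) le_rfl)]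
    · rw [key (n+1), if_pos (hcz (n+1) le_rfl)]

lemma hstar_learns : ∀ L ∈ LL, Learns Itop (andRes CIndRes ExC) hstar L := by
  rintro L ⟨c, hc, htag, hB | ⟨z, hz0, hA⟩⟩
  · subst hB; exact hstar_learns_B hc htag
  · subst hA; exact hstar_learns_A hc hz0 htag

end Positive

section Negative

/-- The one-step transition function of a total learner. -/
noncomputable def stepT (h : Learner) (htot : ∀ x, (h x).Dom) (q : ℕ) (d : Option ℕ) : ℕ :=
  (h (Encodable.encode (some (q, d) : Option (ℕ × Option ℕ)))).get (htot _)

/-- State of a total learner after a finite sequence. -/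
noncomputable def foldT (h : Learner) (htot : ∀ x, (h x).Dom) (l : List (Option ℕ)) : ℕ :=
  l.foldl (stepT h htot) ((h 0).get (htot 0))

lemma initSeg_succ (T : Text) (i : ℕ) : initSeg T (i + 1) = initSeg T i ++ [T i] := by
  simp [initSeg, List.range_succ]

lemma foldT_append (h : Learner) (htot : ∀ x, (h x).Dom) (l : List (Option ℕ)) (d : Option ℕ) :
    foldT h htot (l ++ [d]) = stepT h htot (foldT h htot l) d := by
  simp [foldT, List.foldl_append]

lemma Itop_foldT (h : Learner) (htot : ∀ x, (h x).Dom) (T : Text) (i : ℕ) :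
    Itop h T i = Part.some (foldT h htot (initSeg T i)) := by
  induction i with
  | zero =>
    show h _ = _
    rw [encode_none_eq]
    exact (Part.some_get _).symm
  | succ i ih =>
    rw [Itop, ih, Part.bind_some, initSeg_succ, foldT_append]
    exact (Part.some_get _).symm

/-- A symbol is legitimate for `L` if it is a pause or an element of `L`. -/
def legit (L : Set ℕ) (d : Option ℕ) : Prop := d = none ∨ ∃ x ∈ L, d = some x

/-- Locking-sequence lemma for total iterative learners. -/
lemma lock_exists_s4 {h : Learner} (htot : ∀ x, (h x).Dom) {L : Set ℕ}
    (hL : Learns Itop (andRes CIndRes ExC) h L) :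
    ∃ σ : List (Option ℕ), (∀ d ∈ σ, legit L d) ∧
      ∀ d, legit L d → stepT h htot (foldT h htot σ) d = foldT h htot σ := by
  classical
  by_contra hno
  push_neg at hno
  set D : List (Option ℕ) → Option ℕ := fun σ =>
    if hσ : ∀ d ∈ σ, legit L d then (hno σ hσ).choose else none with hD
  have hDleg : ∀ σ, legit L (D σ) := by
    intro σ
    simp only [hD]
    split
    · exact (hno σ ‹_›).choose_spec.1
    · exact Or.inl rfl
  have hDne : ∀ σ, (∀ d ∈ σ, legit L d) →
      stepT h htot (foldT h htot σ) (D σ) ≠ foldT h htot σ := by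
    intro σ hσ
    simp only [hD]
    rw [dif_pos hσ]
    exact (hno σ hσ).choose_spec.2
  set mm : ℕ → Option ℕ := fun n => if n ∈ L then some n else none with hmm
  have hmmleg : ∀ n, legit L (mm n) := by
    intro n
    simp only [hmm]
    split
    · exact Or.inr ⟨n, ‹_›, rfl⟩
    · exact Or.inl rfl
  set σs : ℕ → List (Option ℕ) :=
    fun n => Nat.rec [] (fun n σ => σ ++ [mm n, D (σ ++ [mm n])]) n with hσs
  have σs_succ : ∀ n, σs (n + 1) = σs n ++ [mm n, D (σs n ++ [mm n])] := fun n => rfl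
  have σsleg : ∀ n, ∀ d ∈ σs n, legit L d := by
    intro n
    induction n with
    | zero => intro d hd; cases hd
    | succ n ih =>
      rw [σs_succ]
      intro d hd
      rcases List.mem_append.1 hd with hd | hd
      · exact ih d hd
      · rcases List.mem_pair.1 hd with rfl | rfl
        · exact hmmleg n
        · exact hDleg _
  have σleg' : ∀ n, ∀ d ∈ σs n ++ [mm n], legit L d := by
    intro n d hd
    rcases List.mem_append.1 hd with hd | hd
    · exact σsleg n d hd
    · rcases List.mem_singleton.1 hd with rfl
      exact hmmleg n
  set T : Text := fun i => if i % 2 = 0 then mm (i / 2) else D (σs (i / 2) ++ [mm (i / 2)])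
    with hTdef
  have hTeven : ∀ n, T (2 * n) = mm n := by
    intro n
    have h1 : (2 * n) % 2 = 0 := by omega
    have h2 : (2 * n) / 2 = n := by omega
    simp only [hTdef]
    simp [h1, h2]
  have hTodd : ∀ n, T (2 * n + 1) = D (σs n ++ [mm n]) := by
    intro n
    have h1 : ¬ (2 * n + 1) % 2 = 0 := by omega
    have h2 : (2 * n + 1) / 2 = n := by omega
    simp only [hTdef]
    simp [h1, h2]
  have initseg : ∀ n, initSeg T (2 * n) = σs n := by
    intro n
    induction n with
    | zero => rfl
    | succ n ih =>
      have h1 : 2 * (n + 1) = (2 * n + 1) + 1 := by omega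
      rw [h1, initSeg_succ, initSeg_succ, ih, hTeven, hTodd, σs_succ]
      simp
  have hcontent : content T = L := by
    ext x
    constructor
    · rintro ⟨i, hi⟩
      simp only [hTdef] at hi
      by_cases hpar : i % 2 = 0
      · rw [if_pos hpar] at hi
        rcases hmmleg (i / 2) with hnone | ⟨y, hy, heq⟩
        · rw [hi] at hnone; cases hnone
        · rw [hi] at heq; cases Option.some_inj.1 heq; exact hy
      · rw [if_neg hpar] at hi
        rcases hDleg (σs (i / 2) ++ [mm (i / 2)]) with hnone | ⟨y, hy, heq⟩
        · rw [hi] at hnone; cases hnone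
        · rw [hi] at heq; cases Option.some_inj.1 heq; exact hy
    · intro hx
      refine ⟨2 * x, ?_⟩
      rw [hTeven x]
      simp only [hmm]
      simp [hx]
  obtain ⟨-, n₀, hconst, e, he, -, -⟩ := hL T hcontent
  have h1 := hconst (2 * n₀ + 1) (by omega)
  have h2 := hconst (2 * n₀ + 2) (by omega)
  have h3 : Itop h T (2 * n₀ + 2) = Itop h T (2 * n₀ + 1) := by rw [h1, h2]
  rw [Itop_foldT h htot, Itop_foldT h htot] at h3
  have hseg1 : initSeg T (2 * n₀ + 1) = σs n₀ ++ [mm n₀] := by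
    rw [initSeg_succ, initseg n₀, hTeven]
  have hseg2 : initSeg T (2 * n₀ + 2) = (σs n₀ ++ [mm n₀]) ++ [D (σs n₀ ++ [mm n₀])] := by
    have h4 : 2 * n₀ + 2 = (2 * n₀ + 1) + 1 := by omega
    rw [h4, initSeg_succ, hseg1, hTodd]
  rw [hseg1, hseg2, foldT_append] at h3
  exact hDne (σs n₀ ++ [mm n₀]) (σleg' n₀) (Part.some_inj.1 h3)

end Negative

section Assembly

/-- Append a finite list before a text. -/
def appT (σ : List (Option ℕ)) (U : Text) : Text := fun i =>
  if i < σ.length then σ.getD i none else U (i - σ.length)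

open scoped Classical in
/-- The identity text of a set. -/
noncomputable def idT (L : Set ℕ) : Text := fun n => if n ∈ L then some n else none

lemma content_idT (L : Set ℕ) : content (idT L) = L := by
  classical
  ext x
  constructor
  · rintro ⟨n, hn⟩
    by_cases hnL : n ∈ L
    · rw [idT, if_pos hnL] at hn
      cases Option.some_inj.1 hn
      exact hnL
    · rw [idT, if_neg hnL] at hn
      cases hn
  · intro hx
    exact ⟨x, by rw [idT, if_pos hx]⟩

lemma legit_idT (L : Set ℕ) (i : ℕ) : legit L (idT L i) := by
  classical
  rw [idT]
  split
  · exact Or.inr ⟨i, ‹_›, rfl⟩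
  · exact Or.inl rfl

lemma appT_lt {σ : List (Option ℕ)} {U : Text} {i : ℕ} (hi : i < σ.length) :
    appT σ U i = σ.getD i none := if_pos hi

lemma appT_ge (σ : List (Option ℕ)) (U : Text) (k : ℕ) :
    appT σ U (σ.length + k) = U k := by
  rw [appT, if_neg (by omega)]
  congr 1
  omega

lemma initSeg_appT (σ : List (Option ℕ)) (U : Text) :
    initSeg (appT σ U) σ.length = σ := by
  apply List.ext_getElem
  · simp [initSeg]
  · intro i h1 h2
    have hi : i < σ.length := h2
    simp only [initSeg, List.getElem_map, List.getElem_range]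
    rw [appT_lt hi, List.getD_eq_getElem σ none hi]

lemma content_appT (σ : List (Option ℕ)) (U : Text) :
    content (appT σ U) = {x | some x ∈ σ} ∪ content U := by
  ext x
  constructor
  · rintro ⟨i, hi⟩
    by_cases hlen : i < σ.length
    · rw [appT_lt hlen] at hi
      left
      show some x ∈ σ
      rw [← hi, List.getD_eq_getElem σ none hlen]
      exact List.getElem_mem _
    · right
      have hk : i = σ.length + (i - σ.length) := by omega
      rw [hk, appT_ge] at hi
      exact ⟨i - σ.length, hi⟩
  · rintro (hx | ⟨k, hk⟩)
    · obtain ⟨i, hlen, hget⟩ := List.getElem_of_mem hx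
      refine ⟨i, ?_⟩
      rw [appT_lt hlen, List.getD_eq_getElem σ none hlen, hget]
    · exact ⟨σ.length + k, by rw [appT_ge, hk]⟩

lemma fd_partrec {h : Learner} (hpc : Nat.Partrec h) :
    Partrec₂ (fun (c : Code) (x : ℕ) =>
      (h (Nat.pair (x.unpair.2.unpair.1) (x + 1) + 1)).map fun v =>
        if x.unpair.1 = Encodable.encode c ∧ v ≠ x.unpair.2.unpair.1 then 1 else 0) := by
  have harg : Primrec (fun p : Code × ℕ => Nat.pair (p.2.unpair.2.unpair.1) (p.2 + 1) + 1) :=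
    Primrec.succ.comp
      (Primrec₂.natPair.comp
        (Primrec.fst.comp (Primrec.unpair.comp
          (Primrec.snd.comp (Primrec.unpair.comp Primrec.snd))))
        (Primrec.succ.comp Primrec.snd))
  have hh : Partrec fun p : Code × ℕ => h (Nat.pair (p.2.unpair.2.unpair.1) (p.2 + 1) + 1) :=
    (Partrec.nat_iff.2 hpc).comp harg.to_comp
  refine hh.map ?_
  have hcond : PrimrecPred fun pv : (Code × ℕ) × ℕ =>
      pv.1.2.unpair.1 = Encodable.encode pv.1.1 ∧ pv.2 ≠ pv.1.2.unpair.2.unpair.1 := by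
    apply PrimrecPred.and
    · exact Primrec.eq.comp
        (Primrec.fst.comp (Primrec.unpair.comp (Primrec.snd.comp Primrec.fst)))
        (Primrec.encode.comp (Primrec.fst.comp Primrec.fst))
    · apply PrimrecPred.not
      exact Primrec.eq.comp Primrec.snd
        (Primrec.fst.comp (Primrec.unpair.comp
          (Primrec.snd.comp (Primrec.unpair.comp (Primrec.snd.comp Primrec.fst)))))
  exact ((Primrec.ite hcond (Primrec.const 1) (Primrec.const 0)).to_comp).to₂

lemma LL_not_total :
    LL ∉ LearnableREC TotalComputable Itop (andRes CIndRes ExC) := by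
  classical
  rintro ⟨-, h, ⟨hpc, htot⟩, hlearn⟩
  obtain ⟨cd, hcd⟩ := fixed_point₂ (fd_partrec hpc)
  set e := Encodable.encode cd with he_def
  have hphi : ∀ x : ℕ, phi e x =
      Part.some (if x.unpair.1 = e ∧
          stepT h htot x.unpair.2.unpair.1 (some x) ≠ x.unpair.2.unpair.1
        then 1 else 0) := by
    intro x
    rw [he_def, phi_encode]
    simp only [hcd]
    have harg : Nat.pair (x.unpair.2.unpair.1) (x + 1) + 1 =
        Encodable.encode (some (x.unpair.2.unpair.1, some x) : Option (ℕ × Option ℕ)) :=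
      (encode_data_eq _ _).symm
    rw [harg]
    conv_lhs => rw [← Part.some_get (htot (Encodable.encode
      (some (x.unpair.2.unpair.1, some x) : Option (ℕ × Option ℕ))))]
    rw [Part.map_some]
    rfl
  have hCe : CIndex e := fun x => by
    rw [hphi x]
    split
    · exact Or.inr rfl
    · exact Or.inl rfl
  have hmem : ∀ x : ℕ, x ∈ Cset e ↔
      (x.unpair.1 = e ∧ stepT h htot x.unpair.2.unpair.1 (some x) ≠ x.unpair.2.unpair.1) := by
    intro x
    simp only [Cset, Set.mem_setOf_eq, hphi x, Part.some_inj]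
    split
    · simp_all
    · simp_all
  have hLB : Cset e ∈ LL := ⟨e, hCe, fun x hx => ((hmem x).1 hx).1, Or.inl rfl⟩
  obtain ⟨σ, hσleg, hlock⟩ := lock_exists_s4 htot (hlearn _ hLB)
  set q := foldT h htot σ with hq
  have habs : ∀ j : ℕ, stepT h htot q (some (Nat.pair e (Nat.pair q j))) = q := by
    intro j
    by_contra hne
    have hx : Nat.pair e (Nat.pair q j) ∈ Cset e := by
      rw [hmem]
      simp only [Nat.unpair_pair]
      exact ⟨by trivial, hne⟩
    exact hne (hlock _ (Or.inr ⟨_, hx, rfl⟩))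
  set z := Nat.pair e (Nat.pair q 0) with hz
  have hstepz : stepT h htot q (some z) = q := habs 0
  have hznot : z ∉ Cset e := by
    rw [hmem]
    rintro ⟨-, hne⟩
    rw [hz] at hne
    simp only [Nat.unpair_pair] at hne
    exact hne (habs 0)
  have hz0 : phi e z = Part.some 0 := by
    rw [hphi z]
    congr 1
    rw [if_neg]
    rintro ⟨-, hne⟩
    rw [hz] at hne
    simp only [Nat.unpair_pair] at hne
    exact hne (habs 0)
  have hLA : Cset e ∪ {z} ∈ LL := by
    refine ⟨e, hCe, ?_, Or.inr ⟨z, hz0, rfl⟩⟩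
    rintro x (hx | rfl)
    · exact ((hmem x).1 hx).1
    · rw [hz]; simp [Nat.unpair_pair]
  -- absorption along any continuation of a `q`-prefix by legitimate data or `z`
  have absorb : ∀ (σ' : List (Option ℕ)), foldT h htot σ' = q →
      ∀ U : Text, (∀ i, legit (Cset e) (U i) ∨ U i = some z) →
      ∀ k, foldT h htot (initSeg (appT σ' U) (σ'.length + k)) = q := by
    intro σ' hσ' U hU k
    induction k with
    | zero => rw [Nat.add_zero, initSeg_appT, hσ']
    | succ k ih =>
      rw [show σ'.length + (k + 1) = (σ'.length + k) + 1 by omega, initSeg_succ,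
        foldT_append, ih, appT_ge]
      rcases hU k with hleg | hzk
      · exact hlock _ hleg
      · rw [hzk]
        exact hstepz
  -- extraction of the limit hypothesis
  have limit : ∀ (σ' : List (Option ℕ)), foldT h htot σ' = q →
      ∀ U : Text, (∀ i, legit (Cset e) (U i) ∨ U i = some z) →
      ∀ L : Set ℕ, L ∈ LL → content (appT σ' U) = L → Cset q = L := by
    intro σ' hσ' U hU L hLmem hcont
    obtain ⟨-, n₀, hconst, e₀, he₀, -, hCset⟩ := hlearn L hLmem (appT σ' U) hcont
    have h1 := hconst (σ'.length + n₀) (by omega)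
    rw [Itop_foldT h htot, absorb σ' hσ' U hU n₀, he₀] at h1
    have he' : e₀ = q := (Part.some_inj.1 h1).symm
    rw [← hcont, ← hCset, he']
  -- first text: Cset e
  have hUB : ∀ i, legit (Cset e) (idT (Cset e) i) ∨ idT (Cset e) i = some z :=
    fun i => Or.inl (legit_idT _ i)
  have hcontB : content (appT σ (idT (Cset e))) = Cset e := by
    rw [content_appT, content_idT]
    apply Set.union_eq_self_of_subset_left
    intro x hx
    rcases hσleg (some x) hx with hnone | ⟨y, hy, heq⟩
    · cases hnone
    · cases Option.some_inj.1 heq.symm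
      exact hy
  have hB := limit σ hq.symm (idT (Cset e)) hUB (Cset e) hLB hcontB
  -- second text: Cset e ∪ {z}
  have hfoldz : foldT h htot (σ ++ [some z]) = q := by
    rw [foldT_append, ← hq, hstepz]
  have hUA : ∀ i, legit (Cset e) (idT (Cset e) i) ∨ idT (Cset e) i = some z :=
    fun i => Or.inl (legit_idT _ i)
  have hcontA : content (appT (σ ++ [some z]) (idT (Cset e))) = Cset e ∪ {z} := by
    rw [content_appT, content_idT]
    ext x
    simp only [Set.mem_union, Set.mem_setOf_eq, List.mem_append, List.mem_singleton,
      Set.mem_singleton_iff]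
    constructor
    · rintro ((hx | hx) | hx)
      · rcases hσleg (some x) hx with hnone | ⟨y, hy, heq⟩
        · cases hnone
        · cases Option.some_inj.1 heq.symm
          exact Or.inl hy
      · exact Or.inr (Option.some_inj.1 hx.symm).symm
      · exact Or.inl hx
    · rintro (hx | rfl)
      · exact Or.inr hx
      · exact Or.inl (Or.inr rfl)
  have hA := limit (σ ++ [some z]) hfoldz (idT (Cset e)) hUA (Cset e ∪ {z}) hLA hcontA
  have : z ∈ Cset e := by
    have hzz : z ∈ Cset e ∪ {z} := Or.inr rfl
    rw [← hA, hB] at hzz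
    exact hzz
  exact hznot this

lemma LL_partial :
    LL ∈ LearnableREC PartComputable Itop (andRes CIndRes ExC) :=
  ⟨LL_rec, hstar, hstar_partrec, hstar_learns⟩

end Assembly

/-- `[ℛTxtItCIndEx_C]_REC ⊊ [TxtItCIndEx_C]_REC`. -/
theorem total_it_cind_ssubset :
    LearnableREC TotalComputable Itop (andRes CIndRes ExC) ⊂
      LearnableREC PartComputable Itop (andRes CIndRes ExC) := by
  constructor
  · rintro ℒ ⟨hrec, h, ⟨hp, -⟩, hl⟩
    exact ⟨hrec, h, hp, hl⟩
  · intro hsub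
    exact LL_not_total (hsub LL_partial)

end InductiveInference
end
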